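/- arXiv:1206.0576 — 7 statements merged into one kernel-verified Lean document; each statement's English description precedes it below -/
import Mathlib

section
/- Criterion C1 (Proposition 3.1): Under the stated invertibility hypothesis, the determinant of XᵗX equals the product over all strata of Ñ(j,l)·(N(j,l) − Ñ(j,l)); equivalently, det(σ²·(XᵗX)⁻¹) = σ^{2(2+2p)} / Π_{(j,l)∈S} Ñ(j,l)·(N(j,l) − Ñ(j,l)) for every σ > 0. -/
open Matrix Finset

noncomputable section

/-- The set of strata `{0,…,J} × {0,…,L}`. -/
abbrev Stratum (J L : ℕ) := Fin (J + 1) × Fin (L + 1)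

/-- Index type for the `p = J + L + J·L` dummy/interaction coordinates. -/
abbrev Idx (J L : ℕ) := Fin J ⊕ Fin L ⊕ (Fin J × Fin L)

/-- Full dummy coding of a stratum, with all interactions. -/
def dummy (J L : ℕ) (s : Stratum J L) : Idx J L → ℝ := fun k =>
  match k with
  | Sum.inl j' => if (s.1 : ℕ) = (j' : ℕ) + 1 then 1 else 0
  | Sum.inr (Sum.inl l') => if (s.2 : ℕ) = (l' : ℕ) + 1 then 1 else 0
  | Sum.inr (Sum.inr q) =>
      if (s.1 : ℕ) = (q.1 : ℕ) + 1 ∧ (s.2 : ℕ) = (q.2 : ℕ) + 1 then 1 else 0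

/-- Column index type of the design matrix: dimension `2 + 2p`. -/
abbrev Cols (J L : ℕ) := Fin 2 ⊕ (Idx J L ⊕ Idx J L)

/-- The design matrix `X`, whose `i`-th row is `(δ_i, 1-δ_i, δ_i f(z_i)ᵗ, (1-δ_i) f(z_i)ᵗ)`. -/
def designX (J L n : ℕ) (z : Fin n → Stratum J L) (δ : Fin n → Bool) :
    Matrix (Fin n) (Cols J L) ℝ :=
  Matrix.of fun i c =>
    match c with
    | Sum.inl a => if a = 0 then (if δ i then (1 : ℝ) else 0) else (if δ i then 0 else 1)
    | Sum.inr (Sum.inl k) => if δ i then dummy J L (z i) k else 0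
    | Sum.inr (Sum.inr k) => if δ i then 0 else dummy J L (z i) k

/-- `N(j,l)`: the size of stratum `(j,l)`. -/
def strN (J L n : ℕ) (z : Fin n → Stratum J L) (s : Stratum J L) : ℕ :=
  (Finset.univ.filter fun i => z i = s).card

/-- `Ñ(j,l)`: the number of members of stratum `(j,l)` assigned to treatment `A`. -/
def strNA (J L n : ℕ) (z : Fin n → Stratum J L) (δ : Fin n → Bool) (s : Stratum J L) : ℕ :=
  (Finset.univ.filter fun i => z i = s ∧ δ i = true).card

namespace C1Aux

variable (J L : ℕ)

/-- embedding of dummy indices into strata (avoiding `(0,0)`). -/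
def ι : Idx J L → Stratum J L
  | Sum.inl j => (j.succ, 0)
  | Sum.inr (Sum.inl l) => (0, l.succ)
  | Sum.inr (Sum.inr q) => (q.1.succ, q.2.succ)

lemma ι_inj : Function.Injective (ι J L) := by
  rintro (j | l | q) (j' | l' | q') h <;>
    simp_all [ι, Prod.ext_iff, Fin.succ_ne_zero, (Fin.succ_ne_zero _).symm,
      Fin.succ_inj, Prod.ext_iff]

lemma ι_ne (k : Idx J L) : ι J L k ≠ (0, 0) := by
  rcases k with j | l | q <;> simp [ι, Prod.ext_iff, Fin.succ_ne_zero]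

/-- the bijection between columns and (stratum, treatment) pairs -/
def w : Cols J L → Stratum J L × Bool
  | Sum.inl a => ((0, 0), if a = 0 then true else false)
  | Sum.inr (Sum.inl k) => (ι J L k, true)
  | Sum.inr (Sum.inr k) => (ι J L k, false)

lemma w_inj : Function.Injective (w J L) := by
  rintro (a | k | k) (a' | k' | k') h
  · fin_cases a <;> fin_cases a' <;> simp_all [w]
  · exact absurd (congrArg Prod.fst h).symm (ι_ne J L k')
  · exact absurd (congrArg Prod.fst h).symm (ι_ne J L k')
  · exact absurd (congrArg Prod.fst h) (ι_ne J L k)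
  · rw [ι_inj J L (congrArg Prod.fst h)]
  · exact absurd (congrArg Prod.snd h) (by simp [w])
  · exact absurd (congrArg Prod.fst h) (ι_ne J L k)
  · exact absurd (congrArg Prod.snd h) (by simp [w])
  · rw [ι_inj J L (congrArg Prod.fst h)]

lemma card_eq : Fintype.card (Cols J L) = Fintype.card (Stratum J L × Bool) := by
  simp [Fintype.card_sum, Fintype.card_prod]
  ring

lemma w_bij : Function.Bijective (w J L) :=
  (Fintype.bijective_iff_injective_and_card _).mpr ⟨w_inj J L, card_eq J L⟩

def ε : Cols J L ≃ Stratum J L × Bool := Equiv.ofBijective _ (w_bij J L)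

@[simp] lemma ε_apply (c : Cols J L) : ε J L c = w J L c := rfl

def amat (m : ℕ) : Matrix (Fin (m + 1)) (Fin (m + 1)) ℝ :=
  Matrix.of fun s t => if t = 0 ∨ s = t then 1 else 0

lemma det_amat (m : ℕ) : (amat m).det = 1 := by
  rw [Matrix.det_of_lowerTriangular (amat m)]
  · simp [amat]
  · intro i j h
    simp only [OrderDual.toDual_lt_toDual] at h
    have h1 : j ≠ 0 := by
      intro hj; subst hj; exact absurd h (by simp [Fin.lt_iff_val_lt_val])
    have h2 : i ≠ j := ne_of_lt h
    simp [amat, h1, h2]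

open Kronecker in
def gmat : Matrix (Stratum J L) (Stratum J L) ℝ := amat J ⊗ₖ amat L

lemma det_gmat : (gmat J L).det = 1 := by
  rw [gmat, Matrix.det_kronecker, det_amat, det_amat, one_pow, one_pow, one_mul]

lemma gmat_apply (s t : Stratum J L) : gmat J L s t = amat J s.1 t.1 * amat L s.2 t.2 := rfl

lemma gmat_zero (s : Stratum J L) : gmat J L s (0, 0) = 1 := by
  simp [gmat_apply, amat]

lemma gmat_zero' (s : Stratum J L) : gmat J L s 0 = 1 := by
  simp [gmat_apply, amat, Prod.fst_zero, Prod.snd_zero]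

lemma gmat_ι (s : Stratum J L) (k : Idx J L) : gmat J L s (ι J L k) = dummy J L s k := by
  have hval : ∀ (m : ℕ) (a : Fin (m+1)) (b : Fin m), (a = b.succ) ↔ ((a : ℕ) = (b : ℕ) + 1) := by
    intro m a b; rw [Fin.ext_iff]; simp
  rcases k with j | l | q <;>
    simp [gmat_apply, amat, ι, dummy, Fin.succ_ne_zero, (Fin.succ_ne_zero _).symm, hval,
      ite_and] <;> split_ifs <;> simp_all

def Mmat : Matrix (Stratum J L × Bool) (Stratum J L × Bool) ℝ :=
  Matrix.of fun a b => if a.2 = b.2 then gmat J L a.1 b.1 else 0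

def r : Stratum J L ⊕ Stratum J L ≃ Stratum J L × Bool :=
  ((Equiv.boolProdEquivSum (Stratum J L)).symm.trans (Equiv.prodComm _ _))

lemma det_Mmat : (Mmat J L).det = 1 := by
  have h : (Mmat J L).submatrix (r J L) (r J L) =
      Matrix.fromBlocks (gmat J L) 0 0 (gmat J L) := by
    ext a b
    rcases a with a | a <;> rcases b with b | b <;>
      simp [Mmat, r, Equiv.boolProdEquivSum, Matrix.fromBlocks]
  have := Matrix.det_submatrix_equiv_self (r J L) (Mmat J L)
  rw [← this, h, Matrix.det_fromBlocks_zero₂₁, det_gmat, one_mul]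

end C1Aux

namespace C1Aux

variable (J L n : ℕ) (z : Fin n → Stratum J L) (δ : Fin n → Bool)

def Tmat : Matrix (Fin n) (Stratum J L × Bool) ℝ :=
  Matrix.of fun i sb => if (z i, δ i) = sb then 1 else 0

def cnt (sb : Stratum J L × Bool) : ℕ :=
  (Finset.univ.filter fun i => (z i, δ i) = sb).card

lemma X_eq : designX J L n z δ = Tmat J L n z δ * (Mmat J L).submatrix id ⇑(ε J L) := by
  ext i c
  have hsum : (Tmat J L n z δ * (Mmat J L).submatrix id ⇑(ε J L)) i c
      = Mmat J L (z i, δ i) (w J L c) := by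
    simp [Matrix.mul_apply, Tmat, ite_mul, Finset.sum_ite_eq]
  rw [hsum]
  rcases c with a | k | k
  · by_cases ha : a = 0 <;> cases hδ : δ i <;>
      simp [designX, Mmat, w, gmat_zero, gmat_zero', ha, hδ]
  · cases hδ : δ i <;> simp [designX, Mmat, w, gmat_ι, hδ]
  · cases hδ : δ i <;> simp [designX, Mmat, w, gmat_ι, hδ]

lemma TtT : (Tmat J L n z δ)ᵀ * Tmat J L n z δ
    = Matrix.diagonal fun sb => (cnt J L n z δ sb : ℝ) := by
  classical
  ext a b
  by_cases hab : a = b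
  · subst hab
    have hsq : ∀ i : Fin n, ((if (z i, δ i) = a then (1:ℝ) else 0)
        * (if (z i, δ i) = a then (1:ℝ) else 0)) = if (z i, δ i) = a then 1 else 0 := by
      intro i; split <;> simp
    rw [Matrix.mul_apply]
    simp only [Matrix.transpose_apply, Tmat, Matrix.of_apply]
    rw [Finset.sum_congr rfl fun i _ => hsq i, Finset.sum_boole]
    simp [cnt]
  · rw [Matrix.diagonal_apply_ne _ hab, Matrix.mul_apply]
    apply Finset.sum_eq_zero
    intro i _
    simp only [Matrix.transpose_apply, Tmat, Matrix.of_apply]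
    split_ifs with h1 h2
    · exact absurd (h1.symm.trans h2) hab
    · simp
    · simp
    · simp

lemma cnt_true (s : Stratum J L) : cnt J L n z δ (s, true) = strNA J L n z δ s := by
  unfold cnt strNA
  congr 1
  ext i
  simp [Prod.ext_iff]

lemma cnt_false (s : Stratum J L) :
    strNA J L n z δ s + cnt J L n z δ (s, false) = strN J L n z s := by
  classical
  have h := Finset.card_filter_add_card_filter_not
    (s := Finset.univ.filter fun i : Fin n => z i = s) (p := fun i => δ i = true)
  have h1 : ((Finset.univ.filter fun i : Fin n => z i = s).filter fun i => δ i = true)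
      = Finset.univ.filter fun i => z i = s ∧ δ i = true := by
    rw [Finset.filter_filter]
  have h2 : ((Finset.univ.filter fun i : Fin n => z i = s).filter fun i => ¬ δ i = true)
      = Finset.univ.filter fun i => (z i, δ i) = (s, false) := by
    rw [Finset.filter_filter]
    ext i
    simp [Prod.ext_iff]
  rw [h1, h2] at h
  exact h

lemma sub_mul (A : Matrix (Stratum J L × Bool) (Stratum J L × Bool) ℝ)
    (B : Matrix (Stratum J L × Bool) (Stratum J L × Bool) ℝ) :
    A.submatrix (⇑(ε J L)) id * B = (A * B).submatrix (⇑(ε J L)) id := by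
  ext c b
  simp [Matrix.mul_apply]

lemma sub_mul_sub (A : Matrix (Stratum J L × Bool) (Stratum J L × Bool) ℝ)
    (B : Matrix (Stratum J L × Bool) (Stratum J L × Bool) ℝ) :
    A.submatrix (⇑(ε J L)) id * B.submatrix id (⇑(ε J L))
      = (A * B).submatrix (⇑(ε J L)) (⇑(ε J L)) := by
  ext c c'
  simp [Matrix.mul_apply]

lemma key : (designX J L n z δ)ᵀ * designX J L n z δ
    = ((Mmat J L)ᵀ * Matrix.diagonal (fun sb => (cnt J L n z δ sb : ℝ)) * Mmat J L).submatrix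
        (⇑(ε J L)) (⇑(ε J L)) := by
  rw [X_eq J L n z δ, Matrix.transpose_mul, Matrix.transpose_submatrix]
  rw [Matrix.mul_assoc, ← Matrix.mul_assoc ((Tmat J L n z δ)ᵀ), TtT J L n z δ]
  rw [← Matrix.mul_assoc, sub_mul, sub_mul_sub]

lemma detXtX : ((designX J L n z δ)ᵀ * designX J L n z δ).det
    = ∏ s : Stratum J L,
        (strNA J L n z δ s : ℝ) * ((strN J L n z s : ℝ) - (strNA J L n z δ s : ℝ)) := by
  rw [key J L n z δ, Matrix.det_submatrix_equiv_self, Matrix.det_mul, Matrix.det_mul,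
    Matrix.det_transpose, det_Mmat, one_mul, mul_one, Matrix.det_diagonal]
  rw [Fintype.prod_prod_type]
  refine Finset.prod_congr rfl fun s _ => ?_
  rw [Fintype.prod_bool, cnt_true]
  have h := cnt_false J L n z δ s
  have : (cnt J L n z δ (s, false) : ℝ) = (strN J L n z s : ℝ) - (strNA J L n z δ s : ℝ) := by
    have := congrArg (fun m : ℕ => (m : ℝ)) h
    push_cast at this
    linarith
  rw [this]

end C1Aux

/-- Criterion C1 (Proposition 3.1): `det(XᵗX) = ∏_{(j,l)} Ñ(j,l)(N(j,l)−Ñ(j,l))`; equivalently,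
`det(σ²(XᵗX)⁻¹) = σ^{2(2+2p)} / ∏_{(j,l)} Ñ(j,l)(N(j,l)−Ñ(j,l))` for every `σ > 0`. -/
theorem C1_determinant (J L n : ℕ) (hJ : 1 ≤ J) (hL : 1 ≤ L) (hn : 1 ≤ n)
    (z : Fin n → Stratum J L) (δ : Fin n → Bool)
    (hA : ∀ s : Stratum J L, 1 ≤ strNA J L n z δ s)
    (hB : ∀ s : Stratum J L, strNA J L n z δ s + 1 ≤ strN J L n z s) :
    ((designX J L n z δ)ᵀ * designX J L n z δ).det =
        (∏ s : Stratum J L,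
          (strNA J L n z δ s : ℝ) * ((strN J L n z s : ℝ) - (strNA J L n z δ s : ℝ))) ∧
      ∀ σ : ℝ, 0 < σ →
        (σ ^ 2 • ((designX J L n z δ)ᵀ * designX J L n z δ)⁻¹).det =
          σ ^ (2 * (2 + 2 * (J + L + J * L))) /
            ∏ s : Stratum J L,
              (strNA J L n z δ s : ℝ) * ((strN J L n z s : ℝ) - (strNA J L n z δ s : ℝ)) := by
  classical
  refine ⟨C1Aux.detXtX J L n z δ, fun σ hσ => ?_⟩
  rw [Matrix.det_smul, Matrix.det_nonsing_inv, C1Aux.detXtX J L n z δ, Ring.inverse_eq_inv]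
  have hc : Fintype.card (Cols J L) = 2 + 2 * (J + L + J * L) := by
    simp [Fintype.card_sum, Fintype.card_prod]
    ring
  rw [hc, ← pow_mul, div_eq_mul_inv]
end
end

section
/- Criterion C3 (Proposition 3.1): Under the stated invertibility hypothesis, the trace of (XᵗX)⁻¹ equals Σ_{j=1}^{J} Σ_{l=1}^{L} N(j,l)/(Ñ(j,l)·(N(j,l)−Ñ(j,l))) + (L+1)·Σ_{j=1}^{J} N(j,0)/(Ñ(j,0)·(N(j,0)−Ñ(j,0))) + (J+1)·Σ_{l=1}^{L} N(0,l)/(Ñ(0,l)·(N(0,l)−Ñ(0,l))) + (J+1)(L+1)·N(0,0)/(Ñ(0,0)·(N(0,0)−Ñ(0,0))). -/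
open Matrix Finset

noncomputable section

namespace C3aux

variable (J L : ℕ)

/-- indicator of the stratum `(a,b)`. -/
def ind (a b : ℕ) (s : Stratum J L) : ℝ := if (s.1 : ℕ) = a ∧ (s.2 : ℕ) = b then 1 else 0

def TinvF : Idx J L → Stratum J L → ℝ := fun k s =>
  match k with
  | Sum.inl j' => ind J L ((j' : ℕ) + 1) 0 s - ind J L 0 0 s
  | Sum.inr (Sum.inl l') => ind J L 0 ((l' : ℕ) + 1) s - ind J L 0 0 s
  | Sum.inr (Sum.inr q) =>
      ind J L ((q.1 : ℕ) + 1) ((q.2 : ℕ) + 1) s - ind J L ((q.1 : ℕ) + 1) 0 s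
        - ind J L 0 ((q.2 : ℕ) + 1) s + ind J L 0 0 s

lemma ind_eq (a : Fin (J+1)) (b : Fin (L+1)) (s : Stratum J L) :
    ind J L (a : ℕ) (b : ℕ) s = if s = (a, b) then 1 else 0 := by
  unfold ind
  congr 1
  simp [Prod.ext_iff, Fin.ext_iff]

lemma sum_ind_mul (a : Fin (J+1)) (b : Fin (L+1)) (F : Stratum J L → ℝ) :
    ∑ s : Stratum J L, ind J L (a : ℕ) (b : ℕ) s * F s = F (a, b) := by
  have h : ∀ s : Stratum J L, ind J L (a:ℕ) (b:ℕ) s * F s = if s = (a,b) then F s else 0 := by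
    intro s; rw [ind_eq]; split <;> simp
  rw [Finset.sum_congr rfl fun s _ => h s]
  simp

lemma sum_ind00 (F : Stratum J L → ℝ) :
    ∑ s : Stratum J L, ind J L 0 0 s * F s = F (0, 0) := by
  simpa using sum_ind_mul J L 0 0 F

lemma sum_ind_j0 (j : Fin J) (F : Stratum J L → ℝ) :
    ∑ s : Stratum J L, ind J L ((j : ℕ) + 1) 0 s * F s = F (j.succ, 0) := by
  simpa [Fin.val_succ] using sum_ind_mul J L j.succ 0 F

lemma sum_ind_0l (l : Fin L) (F : Stratum J L → ℝ) :
    ∑ s : Stratum J L, ind J L 0 ((l : ℕ) + 1) s * F s = F (0, l.succ) := by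
  simpa [Fin.val_succ] using sum_ind_mul J L 0 l.succ F

lemma sum_ind_jl (j : Fin J) (l : Fin L) (F : Stratum J L → ℝ) :
    ∑ s : Stratum J L, ind J L ((j : ℕ) + 1) ((l : ℕ) + 1) s * F s = F (j.succ, l.succ) := by
  simpa [Fin.val_succ] using sum_ind_mul J L j.succ l.succ F

/-- the half design-coding matrix. -/
def Th : Matrix (Stratum J L) (Unit ⊕ Idx J L) ℝ :=
  Matrix.of fun s c => match c with
    | Sum.inl _ => 1
    | Sum.inr k => dummy J L s k

def Thinv : Matrix (Unit ⊕ Idx J L) (Stratum J L) ℝ :=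
  Matrix.of fun c s => match c with
    | Sum.inl _ => ind J L 0 0 s
    | Sum.inr k => TinvF J L k s

lemma Thinv_mul_Th : Thinv J L * Th J L = 1 := by
  ext c c'
  rw [Matrix.mul_apply, Matrix.one_apply]
  have expand : ∀ s : Stratum J L, (Thinv J L) c s * (Th J L) s c' =
      (match c with
        | Sum.inl _ => ind J L 0 0 s * Th J L s c'
        | Sum.inr (Sum.inl j') => ind J L ((j':ℕ)+1) 0 s * Th J L s c'
            - ind J L 0 0 s * Th J L s c'
        | Sum.inr (Sum.inr (Sum.inl l')) => ind J L 0 ((l':ℕ)+1) s * Th J L s c'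
            - ind J L 0 0 s * Th J L s c'
        | Sum.inr (Sum.inr (Sum.inr q)) =>
            ind J L ((q.1:ℕ)+1) ((q.2:ℕ)+1) s * Th J L s c'
            - ind J L ((q.1:ℕ)+1) 0 s * Th J L s c'
            - ind J L 0 ((q.2:ℕ)+1) s * Th J L s c'
            + ind J L 0 0 s * Th J L s c') := by
    intro s
    rcases c with _ | (j' | (l' | q)) <;> simp [Thinv, TinvF] <;> ring
  rw [Finset.sum_congr rfl fun s _ => expand s]
  rcases c with _ | (j' | (l' | q))
  · rw [sum_ind00]
    rcases c' with _ | (j'' | (l'' | q'')) <;>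
      simp [Th, dummy, Fin.ext_iff]
  · rw [Finset.sum_sub_distrib, sum_ind00, sum_ind_j0]
    rcases c' with _ | (j'' | (l'' | q'')) <;>
      simp [Th, dummy, Fin.ext_iff, Fin.val_succ]
  · rw [Finset.sum_sub_distrib, sum_ind00, sum_ind_0l]
    rcases c' with _ | (j'' | (l'' | q'')) <;>
      simp [Th, dummy, Fin.ext_iff, Fin.val_succ]
  · rw [Finset.sum_add_distrib, Finset.sum_sub_distrib, Finset.sum_sub_distrib,
      sum_ind00, sum_ind_j0, sum_ind_0l, sum_ind_jl]
    rcases c' with _ | (j'' | (l'' | q'')) <;>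
      simp [Th, dummy, Fin.ext_iff, Fin.val_succ, Prod.ext_iff]

lemma Th_mul_Thinv : Th J L * Thinv J L = 1 := by
  have e : (Unit ⊕ Idx J L) ≃ Stratum J L := by
    apply Fintype.equivOfCardEq
    simp [Fintype.card_sum, Fintype.card_prod]
    ring
  exact (Matrix.mul_eq_one_comm_of_equiv e).mp (Thinv_mul_Th J L)

end C3aux

namespace C3aux

def eCols (J L : ℕ) : Cols J L ≃ (Unit ⊕ Idx J L) ⊕ (Unit ⊕ Idx J L) where
  toFun c := match c with
    | Sum.inl a => if a = 0 then Sum.inl (Sum.inl ()) else Sum.inr (Sum.inl ())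
    | Sum.inr (Sum.inl k) => Sum.inl (Sum.inr k)
    | Sum.inr (Sum.inr k) => Sum.inr (Sum.inr k)
  invFun t := match t with
    | Sum.inl (Sum.inl _) => Sum.inl 0
    | Sum.inl (Sum.inr k) => Sum.inr (Sum.inl k)
    | Sum.inr (Sum.inl _) => Sum.inl 1
    | Sum.inr (Sum.inr k) => Sum.inr (Sum.inr k)
  left_inv := by
    intro c
    rcases c with a | (k | k)
    · fin_cases a <;> simp
    · simp
    · simp
  right_inv := by
    intro t
    rcases t with (_ | k) | (_ | k) <;> simp

def Cmat (J L : ℕ) : Matrix (Stratum J L ⊕ Stratum J L) (Cols J L) ℝ :=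
  (Matrix.fromBlocks (Th J L) 0 0 (Th J L)).submatrix id (eCols J L)

def Cinv (J L : ℕ) : Matrix (Cols J L) (Stratum J L ⊕ Stratum J L) ℝ :=
  (Matrix.fromBlocks (Thinv J L) 0 0 (Thinv J L)).submatrix (eCols J L) id

lemma Cinv_mul_Cmat (J L : ℕ) : Cinv J L * Cmat J L = 1 := by
  unfold Cinv Cmat
  have : (Matrix.fromBlocks (Thinv J L) 0 0 (Thinv J L)).submatrix (eCols J L) id *
      (Matrix.fromBlocks (Th J L) 0 0 (Th J L)).submatrix (Equiv.refl _) (eCols J L) =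
      ((Matrix.fromBlocks (Thinv J L) 0 0 (Thinv J L)) *
        (Matrix.fromBlocks (Th J L) 0 0 (Th J L))).submatrix (eCols J L) (eCols J L) :=
    Matrix.submatrix_mul_equiv _ _ _ (Equiv.refl _) _
  simp only [Equiv.coe_refl] at this
  rw [this, Matrix.fromBlocks_multiply]
  simp [Thinv_mul_Th, Matrix.fromBlocks_one, Matrix.submatrix_one_equiv]

lemma Cmat_mul_Cinv (J L : ℕ) : Cmat J L * Cinv J L = 1 := by
  unfold Cinv Cmat
  have : (Matrix.fromBlocks (Th J L) 0 0 (Th J L)).submatrix (Equiv.refl _) (eCols J L) *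
      (Matrix.fromBlocks (Thinv J L) 0 0 (Thinv J L)).submatrix (eCols J L) (Equiv.refl _) =
      ((Matrix.fromBlocks (Th J L) 0 0 (Th J L)) *
        (Matrix.fromBlocks (Thinv J L) 0 0 (Thinv J L))).submatrix (Equiv.refl _) (Equiv.refl _) :=
    Matrix.submatrix_mul_equiv _ _ _ (eCols J L) _
  simp only [Equiv.coe_refl] at this
  rw [show ((eCols J L : Cols J L → _) = ((eCols J L : Cols J L → _))) from rfl] at this
  rw [this, Matrix.fromBlocks_multiply]
  simp [Th_mul_Thinv, Matrix.fromBlocks_one]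

end C3aux

namespace C3aux

variable (J L n : ℕ) (z : Fin n → Stratum J L) (δ : Fin n → Bool)

def Emat : Matrix (Fin n) (Stratum J L ⊕ Stratum J L) ℝ :=
  Matrix.of fun i t => match t with
    | Sum.inl s => if z i = s ∧ δ i = true then 1 else 0
    | Sum.inr s => if z i = s ∧ δ i = false then 1 else 0

lemma Cmat_apply_l (s : Stratum J L) (c : Cols J L) :
    Cmat J L (Sum.inl s) c =
      (match c with
        | Sum.inl a => if a = 0 then (1:ℝ) else 0
        | Sum.inr (Sum.inl k) => dummy J L s k
        | Sum.inr (Sum.inr _) => 0) := by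
  rcases c with a | (k | k)
  · fin_cases a <;> simp [Cmat, eCols, Th]
  · simp [Cmat, eCols, Th]
  · simp [Cmat, eCols, Th]

lemma Cmat_apply_r (s : Stratum J L) (c : Cols J L) :
    Cmat J L (Sum.inr s) c =
      (match c with
        | Sum.inl a => if a = 0 then (0:ℝ) else 1
        | Sum.inr (Sum.inl _) => 0
        | Sum.inr (Sum.inr k) => dummy J L s k) := by
  rcases c with a | (k | k)
  · fin_cases a <;> simp [Cmat, eCols, Th]
  · simp [Cmat, eCols, Th]
  · simp [Cmat, eCols, Th]

lemma X_eq : designX J L n z δ = Emat J L n z δ * Cmat J L := by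
  ext i c
  rw [Matrix.mul_apply, Fintype.sum_sum_type]
  have h1 : ∀ s : Stratum J L, Emat J L n z δ i (Sum.inl s) * Cmat J L (Sum.inl s) c =
      if z i = s then (if δ i = true then Cmat J L (Sum.inl s) c else 0) else 0 := by
    intro s; simp [Emat]; split_ifs <;> simp_all
  have h2 : ∀ s : Stratum J L, Emat J L n z δ i (Sum.inr s) * Cmat J L (Sum.inr s) c =
      if z i = s then (if δ i = false then Cmat J L (Sum.inr s) c else 0) else 0 := by
    intro s; simp [Emat]; split_ifs <;> simp_all
  rw [Finset.sum_congr rfl fun s _ => h1 s, Finset.sum_congr rfl fun s _ => h2 s,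
    Finset.sum_ite_eq, Finset.sum_ite_eq]
  simp only [Finset.mem_univ, if_true]
  rcases hd : δ i with _ | _ <;>
    rcases c with a | (k | k) <;>
      simp [designX, Cmat_apply_l, Cmat_apply_r, hd]

def dvec : Stratum J L ⊕ Stratum J L → ℝ := fun t =>
  match t with
  | Sum.inl s => (strNA J L n z δ s : ℝ)
  | Sum.inr s => (strN J L n z s : ℝ) - (strNA J L n z δ s : ℝ)

lemma card_false (s : Stratum J L) :
    ((Finset.univ.filter fun i => z i = s ∧ δ i = false).card : ℝ) =
      (strN J L n z s : ℝ) - (strNA J L n z δ s : ℝ) := by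
  have key : strNA J L n z δ s + (Finset.univ.filter fun i => z i = s ∧ δ i = false).card
      = strN J L n z s := by
    unfold strNA strN
    rw [← Finset.filter_filter, ← Finset.filter_filter]
    have := Finset.card_filter_add_card_filter_not
      (s := Finset.univ.filter fun i : Fin n => z i = s) (p := fun i => δ i = true)
    simpa using this
  have := congrArg (Nat.cast (R := ℝ)) key
  push_cast at this
  linarith

lemma EtE : (Emat J L n z δ)ᵀ * Emat J L n z δ = Matrix.diagonal (dvec J L n z δ) := by
  ext t t'
  rw [Matrix.mul_apply]
  rcases t with s | s <;> rcases t' with s' | s'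
  · have h : ∀ i, (Emat J L n z δ)ᵀ (Sum.inl s) i * Emat J L n z δ i (Sum.inl s') =
        if (z i = s ∧ δ i = true) ∧ (z i = s' ∧ δ i = true) then (1:ℝ) else 0 := by
      intro i
      simp only [Matrix.transpose_apply, Emat, Matrix.of_apply]
      by_cases h1 : z i = s ∧ δ i = true <;> by_cases h2 : z i = s' ∧ δ i = true <;>
        simp [h1, h2]
    rw [Finset.sum_congr rfl fun i _ => h i, Finset.sum_boole]
    rcases eq_or_ne s s' with rfl | hss
    · rw [Matrix.diagonal_apply_eq]
      have hfilter : (Finset.univ.filter fun i =>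
          (z i = s ∧ δ i = true) ∧ (z i = s ∧ δ i = true)) =
          Finset.univ.filter fun i => z i = s ∧ δ i = true := by
        apply Finset.filter_congr; intro i _; constructor <;> (intro hx; tauto)
      rw [hfilter]
      rfl
    · rw [Matrix.diagonal_apply_ne _ (by simpa using hss)]
      have hempty : (Finset.univ.filter fun i =>
          (z i = s ∧ δ i = true) ∧ (z i = s' ∧ δ i = true)) = ∅ :=
        Finset.filter_eq_empty_iff.mpr fun i _ => fun ⟨⟨h1, _⟩, ⟨h2, _⟩⟩ => hss (h1 ▸ h2 ▸ rfl)
      rw [hempty]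
      simp
  · have h : ∀ i, (Emat J L n z δ)ᵀ (Sum.inl s) i * Emat J L n z δ i (Sum.inr s') = 0 := by
      intro i
      simp only [Matrix.transpose_apply, Emat, Matrix.of_apply]
      split_ifs <;> simp_all
    rw [Finset.sum_congr rfl fun i _ => h i]
    rw [Matrix.diagonal_apply_ne _ (by simp)]
    simp
  · have h : ∀ i, (Emat J L n z δ)ᵀ (Sum.inr s) i * Emat J L n z δ i (Sum.inl s') = 0 := by
      intro i
      simp only [Matrix.transpose_apply, Emat, Matrix.of_apply]
      split_ifs <;> simp_all
    rw [Finset.sum_congr rfl fun i _ => h i]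
    rw [Matrix.diagonal_apply_ne _ (by simp)]
    simp
  · have h : ∀ i, (Emat J L n z δ)ᵀ (Sum.inr s) i * Emat J L n z δ i (Sum.inr s') =
        if (z i = s ∧ δ i = false) ∧ (z i = s' ∧ δ i = false) then (1:ℝ) else 0 := by
      intro i
      simp only [Matrix.transpose_apply, Emat, Matrix.of_apply]
      by_cases h1 : z i = s ∧ δ i = false <;> by_cases h2 : z i = s' ∧ δ i = false <;>
        simp [h1, h2]
    rw [Finset.sum_congr rfl fun i _ => h i, Finset.sum_boole]
    rcases eq_or_ne s s' with rfl | hss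
    · rw [Matrix.diagonal_apply_eq]
      have hfilter : (Finset.univ.filter fun i =>
          (z i = s ∧ δ i = false) ∧ (z i = s ∧ δ i = false)) =
          Finset.univ.filter fun i => z i = s ∧ δ i = false := by
        apply Finset.filter_congr; intro i _; constructor <;> (intro hx; tauto)
      rw [hfilter, card_false J L n z δ s]
      rfl
    · rw [Matrix.diagonal_apply_ne _ (by simpa using hss)]
      have hempty : (Finset.univ.filter fun i =>
          (z i = s ∧ δ i = false) ∧ (z i = s' ∧ δ i = false)) = ∅ :=
        Finset.filter_eq_empty_iff.mpr fun i _ => fun ⟨⟨h1, _⟩, ⟨h2, _⟩⟩ => hss (h1 ▸ h2 ▸ rfl)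
      rw [hempty]
      simp

end C3aux

namespace C3aux

def wsum (J L : ℕ) (s : Stratum J L) : ℝ :=
  ind J L 0 0 s * ind J L 0 0 s + ∑ k : Idx J L, TinvF J L k s * TinvF J L k s

lemma wsum_val (J L : ℕ) (s : Stratum J L) :
    wsum J L s = (if (s.1 : ℕ) = 0 then (J:ℝ)+1 else 1) *
      (if (s.2 : ℕ) = 0 then (L:ℝ)+1 else 1) := by
  obtain ⟨a, b⟩ := s
  rcases Fin.eq_zero_or_eq_succ a with rfl | ⟨j, rfl⟩ <;>
    rcases Fin.eq_zero_or_eq_succ b with rfl | ⟨l, rfl⟩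
  · simp only [wsum, Fintype.sum_sum_type, Fintype.sum_prod_type, TinvF, ind]
    simp [Finset.sum_const]
    ring
  · simp only [wsum, Fintype.sum_sum_type, Fintype.sum_prod_type, TinvF, ind]
    simp [Finset.sum_const, Fin.val_succ, Fin.val_inj, Finset.sum_ite_eq]
    ring
  · simp only [wsum, Fintype.sum_sum_type, Fintype.sum_prod_type, TinvF, ind]
    simp [Finset.sum_const, Fin.val_succ, Fin.val_inj, Finset.sum_ite_eq]
    ring
  · simp only [wsum, Fintype.sum_sum_type, Fintype.sum_prod_type, TinvF, ind]
    simp [Finset.sum_const, Fin.val_succ, Fin.val_inj, Finset.sum_ite_eq]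
    have h : ∀ (x : Fin J) (y : Fin L),
        (if j = x ∧ l = y then (if j = x ∧ l = y then (1:ℝ) else 0) else 0)
        = (if j = x then (1:ℝ) else 0) * (if l = y then (1:ℝ) else 0) := by
      intro x y; by_cases h1 : j = x <;> by_cases h2 : l = y <;> simp [h1, h2]
    simp only [h]
    rw [← Finset.sum_mul_sum]
    simp [Finset.sum_ite_eq]

end C3aux

namespace C3aux

lemma Cinv_sq_l (J L : ℕ) (s : Stratum J L) :
    ∑ c : Cols J L, Cinv J L c (Sum.inl s) * Cinv J L c (Sum.inl s) = wsum J L s := by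
  rw [Fintype.sum_sum_type, Fintype.sum_sum_type, Fin.sum_univ_two]
  simp [Cinv, eCols, Thinv, wsum]

lemma Cinv_sq_r (J L : ℕ) (s : Stratum J L) :
    ∑ c : Cols J L, Cinv J L c (Sum.inr s) * Cinv J L c (Sum.inr s) = wsum J L s := by
  rw [Fintype.sum_sum_type, Fintype.sum_sum_type, Fin.sum_univ_two]
  simp [Cinv, eCols, Thinv, wsum]

variable (J L n : ℕ) (z : Fin n → Stratum J L) (δ : Fin n → Bool)

def Minv : Matrix (Cols J L) (Cols J L) ℝ :=
  Cinv J L * Matrix.diagonal (fun t => (dvec J L n z δ t)⁻¹) * (Cinv J L)ᵀ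

lemma dvec_ne (hA : ∀ s : Stratum J L, 1 ≤ strNA J L n z δ s)
    (hB : ∀ s : Stratum J L, strNA J L n z δ s + 1 ≤ strN J L n z s) :
    ∀ t, dvec J L n z δ t ≠ 0 := by
  rintro (s | s)
  · have := hA s
    simp only [dvec]
    positivity
  · have h1 := hB s
    have : (strNA J L n z δ s : ℝ) + 1 ≤ (strN J L n z s : ℝ) := by exact_mod_cast h1
    simp only [dvec]
    intro hc
    linarith

lemma XtX_mul_Minv (hA : ∀ s : Stratum J L, 1 ≤ strNA J L n z δ s)
    (hB : ∀ s : Stratum J L, strNA J L n z δ s + 1 ≤ strN J L n z s) :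
    ((designX J L n z δ)ᵀ * designX J L n z δ) * Minv J L n z δ = 1 := by
  rw [X_eq, Matrix.transpose_mul, Minv]
  have key : (Cmat J L)ᵀ * (Emat J L n z δ)ᵀ * (Emat J L n z δ * Cmat J L) =
      (Cmat J L)ᵀ * Matrix.diagonal (dvec J L n z δ) * Cmat J L := by
    rw [Matrix.mul_assoc, ← Matrix.mul_assoc (Emat J L n z δ)ᵀ, EtE, ← Matrix.mul_assoc]
  rw [key]
  have hDD : Matrix.diagonal (dvec J L n z δ) *
      Matrix.diagonal (fun t => (dvec J L n z δ t)⁻¹) = 1 := by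
    rw [Matrix.diagonal_mul_diagonal]
    rw [show (fun t => dvec J L n z δ t * (dvec J L n z δ t)⁻¹) = fun _ => (1:ℝ) from
      funext fun t => mul_inv_cancel₀ (dvec_ne J L n z δ hA hB t)]
    exact Matrix.diagonal_one
  calc (Cmat J L)ᵀ * Matrix.diagonal (dvec J L n z δ) * Cmat J L *
        (Cinv J L * Matrix.diagonal (fun t => (dvec J L n z δ t)⁻¹) * (Cinv J L)ᵀ)
      = (Cmat J L)ᵀ * Matrix.diagonal (dvec J L n z δ) * (Cmat J L * Cinv J L) *
        Matrix.diagonal (fun t => (dvec J L n z δ t)⁻¹) * (Cinv J L)ᵀ := by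
        simp only [Matrix.mul_assoc]
    _ = (Cmat J L)ᵀ * (Matrix.diagonal (dvec J L n z δ) *
        Matrix.diagonal (fun t => (dvec J L n z δ t)⁻¹)) * (Cinv J L)ᵀ := by
        rw [Cmat_mul_Cinv]
        simp only [Matrix.mul_one, Matrix.mul_assoc]
    _ = (Cmat J L)ᵀ * (Cinv J L)ᵀ := by rw [hDD, Matrix.mul_one]
    _ = (Cinv J L * Cmat J L)ᵀ := by rw [Matrix.transpose_mul]
    _ = 1 := by rw [Cinv_mul_Cmat, Matrix.transpose_one]

lemma trace_Minv :
    (Minv J L n z δ).trace = ∑ s : Stratum J L,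
      wsum J L s * ((strNA J L n z δ s : ℝ)⁻¹ +
        ((strN J L n z s : ℝ) - (strNA J L n z δ s : ℝ))⁻¹) := by
  rw [Minv, Matrix.trace_mul_comm, ← Matrix.mul_assoc, Matrix.trace_mul_comm,
    ← Matrix.mul_assoc]
  rw [Matrix.trace, Matrix.mul_assoc]
  have h : ∀ t, ((Matrix.diagonal (fun t => (dvec J L n z δ t)⁻¹)) *
      ((Cinv J L)ᵀ * Cinv J L)).diag t =
      ((Cinv J L)ᵀ * Cinv J L) t t * (dvec J L n z δ t)⁻¹ := by
    intro t
    rw [Matrix.diag_apply, Matrix.diagonal_mul, mul_comm]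
  rw [Finset.sum_congr rfl fun t _ => h t, Fintype.sum_sum_type]
  have hl : ∀ s : Stratum J L, ((Cinv J L)ᵀ * Cinv J L) (Sum.inl s) (Sum.inl s) *
      (dvec J L n z δ (Sum.inl s))⁻¹ = wsum J L s * (strNA J L n z δ s : ℝ)⁻¹ := by
    intro s
    rw [Matrix.mul_apply]
    simp only [Matrix.transpose_apply]
    rw [Cinv_sq_l, dvec]
  have hr : ∀ s : Stratum J L, ((Cinv J L)ᵀ * Cinv J L) (Sum.inr s) (Sum.inr s) *
      (dvec J L n z δ (Sum.inr s))⁻¹ = wsum J L s *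
      ((strN J L n z s : ℝ) - (strNA J L n z δ s : ℝ))⁻¹ := by
    intro s
    rw [Matrix.mul_apply]
    simp only [Matrix.transpose_apply]
    rw [Cinv_sq_r, dvec]
  rw [Finset.sum_congr rfl fun s _ => hl s, Finset.sum_congr rfl fun s _ => hr s,
    ← Finset.sum_add_distrib]
  exact Finset.sum_congr rfl fun s _ => by ring

end C3aux

/-- Criterion C3 (Proposition 3.1): the trace of `(XᵗX)⁻¹`. -/
theorem C3_trace (J L n : ℕ) (hJ : 1 ≤ J) (hL : 1 ≤ L) (hn : 1 ≤ n)
    (z : Fin n → Stratum J L) (δ : Fin n → Bool)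
    (hA : ∀ s : Stratum J L, 1 ≤ strNA J L n z δ s)
    (hB : ∀ s : Stratum J L, strNA J L n z δ s + 1 ≤ strN J L n z s) :
    (((designX J L n z δ)ᵀ * designX J L n z δ)⁻¹).trace =
      (∑ j : Fin J, ∑ l : Fin L,
          (strN J L n z (j.succ, l.succ) : ℝ) /
            ((strNA J L n z δ (j.succ, l.succ) : ℝ) *
              ((strN J L n z (j.succ, l.succ) : ℝ) - (strNA J L n z δ (j.succ, l.succ) : ℝ))))
      + ((L : ℝ) + 1) * ∑ j : Fin J,
          (strN J L n z (j.succ, 0) : ℝ) /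
            ((strNA J L n z δ (j.succ, 0) : ℝ) *
              ((strN J L n z (j.succ, 0) : ℝ) - (strNA J L n z δ (j.succ, 0) : ℝ)))
      + ((J : ℝ) + 1) * ∑ l : Fin L,
          (strN J L n z (0, l.succ) : ℝ) /
            ((strNA J L n z δ (0, l.succ) : ℝ) *
              ((strN J L n z (0, l.succ) : ℝ) - (strNA J L n z δ (0, l.succ) : ℝ)))
      + ((J : ℝ) + 1) * ((L : ℝ) + 1) *
          ((strN J L n z (0, 0) : ℝ) /
            ((strNA J L n z δ (0, 0) : ℝ) *
              ((strN J L n z (0, 0) : ℝ) - (strNA J L n z δ (0, 0) : ℝ)))) := by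
  have hXM := C3aux.XtX_mul_Minv J L n z δ hA hB
  rw [Matrix.inv_eq_right_inv hXM, C3aux.trace_Minv]
  have ha : ∀ s : Stratum J L, (strNA J L n z δ s : ℝ) ≠ 0 := by
    intro s; have := hA s; positivity
  have hb : ∀ s : Stratum J L, (strN J L n z s : ℝ) - (strNA J L n z δ s : ℝ) ≠ 0 := by
    intro s
    have h1 : (strNA J L n z δ s : ℝ) + 1 ≤ (strN J L n z s : ℝ) := by exact_mod_cast hB s
    intro hc; linarith
  have hterm : ∀ s : Stratum J L,
      C3aux.wsum J L s * ((strNA J L n z δ s : ℝ)⁻¹ +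
        ((strN J L n z s : ℝ) - (strNA J L n z δ s : ℝ))⁻¹)
      = ((if (s.1 : ℕ) = 0 then (J:ℝ)+1 else 1) * (if (s.2 : ℕ) = 0 then (L:ℝ)+1 else 1))
        * ((strN J L n z s : ℝ) /
            ((strNA J L n z δ s : ℝ) * ((strN J L n z s : ℝ) - (strNA J L n z δ s : ℝ)))) := by
    intro s
    rw [C3aux.wsum_val]
    have hbs := hb s
    have has := ha s
    by_cases h1 : (s.1 : ℕ) = 0 <;> by_cases h2 : (s.2 : ℕ) = 0 <;>
      simp only [h1, h2, if_true, if_false] <;> field_simp <;> ring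
  rw [Finset.sum_congr rfl fun s _ => hterm s]
  rw [Fintype.sum_prod_type]
  simp only [Fin.sum_univ_succ, Fin.val_zero, Fin.val_succ, Nat.succ_ne_zero, if_true,
    if_false, Nat.add_eq_zero_iff, Nat.one_ne_zero, and_false, one_mul, mul_one]
  rw [Finset.sum_add_distrib]
  simp only [Finset.mul_sum]
  ring
end
end

section
/- Criteria C4 and C5 coincide (Proposition 3.1): Under the stated invertibility hypothesis, with Dᵗ = (0_{2p×2} : I_{2p}) and Eᵗ = (0_{p×2} : I_p : −I_p), one has tr(Dᵗ(XᵗX)⁻¹D) = tr(Eᵗ(XᵗX)⁻¹E), and both equal tr((XᵗX)⁻¹) − N(0,0)/(Ñ(0,0)·(N(0,0)−Ñ(0,0))). -/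
open Matrix Finset

noncomputable section

/-- The selection matrix `D` with `Dᵗ = (0_{2p×2} : I_{2p})`. -/
def selD (J L : ℕ) : Matrix (Cols J L) (Idx J L ⊕ Idx J L) ℝ :=
  Matrix.of fun r c =>
    match r with
    | Sum.inl _ => 0
    | Sum.inr k => if k = c then 1 else 0

/-- The contrast matrix `E` with `Eᵗ = (0_{p×2} : I_p : −I_p)`. -/
def selE (J L : ℕ) : Matrix (Cols J L) (Idx J L) ℝ :=
  Matrix.of fun r c =>
    match r with
    | Sum.inl _ => 0
    | Sum.inr (Sum.inl k) => if k = c then 1 else 0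
    | Sum.inr (Sum.inr k) => if k = c then -1 else 0

/- helpers -/
def uC {m : ℕ} (j : Fin (m + 1)) : ℝ := if j = 0 then 1 else 0
def uV {m : ℕ} (j : Fin (m + 1)) (j' : Fin m) : ℝ :=
  if j = 0 then -1 else if (j : ℕ) = (j' : ℕ) + 1 then 1 else 0

lemma sum_ind {m : ℕ} (x : Fin (m + 1)) :
    ∑ j' : Fin m, (if (x : ℕ) = (j' : ℕ) + 1 then (1 : ℝ) else 0)
      = if x = 0 then 0 else 1 := by
  obtain ⟨xv, hxv⟩ := x
  cases xv with
  | zero => simp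
  | succ k =>
      have hk : k < m := by omega
      rw [if_neg (by simp [Fin.ext_iff])]
      rw [Finset.sum_eq_single (⟨k, hk⟩ : Fin m)]
      · simp
      · intro b _ hb
        have hbk : (b : ℕ) ≠ k := by simpa [Fin.ext_iff] using hb
        rw [if_neg]
        show ¬ (k + 1 = (b : ℕ) + 1)
        omega
      · exact fun h => absurd (Finset.mem_univ _) h

lemma sum_uV_mul {m : ℕ} (j x : Fin (m + 1)) :
    uC j + ∑ j' : Fin m, uV j j' * (if (x : ℕ) = (j' : ℕ) + 1 then 1 else 0)
      = if x = j then 1 else 0 := by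
  by_cases hj : j = 0
  · subst hj
    simp only [uC, uV, if_pos rfl, if_true, eq_self_iff_true, neg_one_mul]
    rw [Finset.sum_neg_distrib, sum_ind]
    by_cases hx : x = 0 <;> simp [hx]
  · obtain ⟨jv, hjv⟩ := j
    have hjv0 : jv ≠ 0 := by simpa [Fin.ext_iff] using hj
    obtain ⟨k, rfl⟩ : ∃ k, jv = k + 1 := ⟨jv - 1, by omega⟩
    have hk : k < m := by omega
    simp only [uC, uV, if_neg hj]
    rw [zero_add, Finset.sum_eq_single (⟨k, hk⟩ : Fin m)]
    · simp only [Fin.ext_iff]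
      by_cases hx : (x : ℕ) = k + 1 <;> simp [hx]
    · intro b _ hb
      have hbk : (b : ℕ) ≠ k := by simpa [Fin.ext_iff] using hb
      rw [if_neg, zero_mul]
      show ¬ (k + 1 = (b : ℕ) + 1)
      omega
    · exact fun h => absurd (Finset.mem_univ _) h

def c0 {J L : ℕ} (s : Stratum J L) : ℝ := uC s.1 * uC s.2

def idum {J L : ℕ} (s : Stratum J L) : Idx J L → ℝ := fun k =>
  match k with
  | Sum.inl j' => uV s.1 j' * uC s.2
  | Sum.inr (Sum.inl l') => uC s.1 * uV s.2 l'
  | Sum.inr (Sum.inr q) => uV s.1 q.1 * uV s.2 q.2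

lemma key2D {J L : ℕ} (s s' : Stratum J L) :
    c0 s + ∑ k : Idx J L, idum s k * dummy J L s' k = if s' = s then 1 else 0 := by
  have hPA := sum_uV_mul s.1 s'.1
  have hPB := sum_uV_mul s.2 s'.2
  set PA := ∑ j' : Fin J, uV s.1 j' * (if (s'.1 : ℕ) = (j' : ℕ) + 1 then (1:ℝ) else 0) with hPAdef
  set PB := ∑ l' : Fin L, uV s.2 l' * (if (s'.2 : ℕ) = (l' : ℕ) + 1 then (1:ℝ) else 0) with hPBdef
  have expand : c0 s + ∑ k : Idx J L, idum s k * dummy J L s' k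
      = (uC s.1 + PA) * (uC s.2 + PB) := by
    rw [Fintype.sum_sum_type, Fintype.sum_sum_type, Fintype.sum_prod_type]
    simp only [idum, dummy, c0]
    have h1 : ∑ j' : Fin J, uV s.1 j' * uC s.2 * (if (s'.1:ℕ) = (j':ℕ)+1 then (1:ℝ) else 0)
        = PA * uC s.2 := by
      rw [hPAdef, Finset.sum_mul]; exact Finset.sum_congr rfl fun j' _ => by ring
    have h2 : ∑ l' : Fin L, uC s.1 * uV s.2 l' * (if (s'.2:ℕ) = (l':ℕ)+1 then (1:ℝ) else 0)
        = uC s.1 * PB := by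
      rw [hPBdef, Finset.mul_sum]; exact Finset.sum_congr rfl fun l' _ => by ring
    have h3 : ∑ j' : Fin J, ∑ l' : Fin L, uV s.1 j' * uV s.2 l' *
          (if (s'.1:ℕ) = (j':ℕ)+1 ∧ (s'.2:ℕ) = (l':ℕ)+1 then (1:ℝ) else 0)
        = PA * PB := by
      rw [hPAdef, hPBdef, Finset.sum_mul_sum]
      refine Finset.sum_congr rfl fun j' _ => Finset.sum_congr rfl fun l' _ => ?_
      by_cases hc1 : (s'.1:ℕ) = (j':ℕ)+1 <;> by_cases hc2 : (s'.2:ℕ) = (l':ℕ)+1 <;>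
        simp [hc1, hc2]
    rw [h1, h2, h3]; ring
  rw [expand, hPA, hPB]
  by_cases e1 : s'.1 = s.1 <;> by_cases e2 : s'.2 = s.2 <;> simp [Prod.ext_iff, e1, e2]

def Wmat (J L : ℕ) : Matrix (Cols J L) (Bool × Stratum J L) ℝ :=
  Matrix.of fun c bs =>
    match c with
    | Sum.inl a => if a = 0 then (if bs.1 then (1:ℝ) else 0) else (if bs.1 then 0 else 1)
    | Sum.inr (Sum.inl k) => if bs.1 then dummy J L bs.2 k else 0
    | Sum.inr (Sum.inr k) => if bs.1 then 0 else dummy J L bs.2 k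

def Vmat (J L : ℕ) : Matrix (Bool × Stratum J L) (Cols J L) ℝ :=
  Matrix.of fun bs c =>
    match c with
    | Sum.inl a => if a = 0 then (if bs.1 then c0 bs.2 else 0) else (if bs.1 then 0 else c0 bs.2)
    | Sum.inr (Sum.inl k) => if bs.1 then idum bs.2 k else 0
    | Sum.inr (Sum.inr k) => if bs.1 then 0 else idum bs.2 k

lemma VW_eq_one (J L : ℕ) : Vmat J L * Wmat J L = 1 := by
  have keyflip : ∀ s s' : Stratum J L,
      c0 s + ∑ k : Idx J L, idum s k * dummy J L s' k = if s = s' then 1 else 0 := by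
    intro s s'
    rw [key2D s s']
    by_cases h : s' = s
    · simp [h]
    · rw [if_neg h, if_neg (fun hh => h hh.symm)]
  ext ⟨b, s⟩ ⟨b', s'⟩
  rw [Matrix.mul_apply, Fintype.sum_sum_type, Fin.sum_univ_two, Fintype.sum_sum_type]
  cases b <;> cases b' <;>
    simp only [Vmat, Wmat, Matrix.of_apply, Matrix.one_apply, Prod.mk.injEq,
      if_true, if_false, Fin.isValue, one_ne_zero, Fin.one_eq_zero_iff, Nat.succ_ne_succ] <;>
    simp only [Bool.false_eq_true, if_false, ite_false, ite_true, zero_mul, mul_zero, mul_one,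
      one_mul, Finset.sum_const_zero, zero_add, add_zero, true_and, false_and,
      if_neg (by simp : ¬ ((1 : Fin 2) = 0))] <;>
  first
  | exact keyflip s s'
  | simp

def cnt (J L n : ℕ) (z : Fin n → Stratum J L) (δ : Fin n → Bool) (bs : Bool × Stratum J L) : ℕ :=
  (Finset.univ.filter fun i => (δ i, z i) = bs).card

lemma X_apply (J L n : ℕ) (z : Fin n → Stratum J L) (δ : Fin n → Bool) (i : Fin n)
    (c : Cols J L) : designX J L n z δ i c = Wmat J L c (δ i, z i) := by
  cases c with
  | inl a => rfl
  | inr k => cases k <;> rfl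

lemma M_factor (J L n : ℕ) (z : Fin n → Stratum J L) (δ : Fin n → Bool) :
    (designX J L n z δ)ᵀ * designX J L n z δ
      = Wmat J L * Matrix.diagonal (fun bs => (cnt J L n z δ bs : ℝ)) * (Wmat J L)ᵀ := by
  ext c c'
  rw [Matrix.mul_apply, Matrix.mul_apply]
  simp only [Matrix.transpose_apply, Matrix.mul_diagonal, X_apply]
  rw [← Finset.sum_fiberwise' Finset.univ (fun i => (δ i, z i))
        (fun bs => Wmat J L c bs * Wmat J L c' bs)]
  refine Finset.sum_congr rfl fun bs _ => ?_
  rw [Finset.sum_const, nsmul_eq_mul]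
  simp only [cnt]
  ring

lemma cnt_true (J L n : ℕ) (z : Fin n → Stratum J L) (δ : Fin n → Bool) (s : Stratum J L) :
    cnt J L n z δ (true, s) = strNA J L n z δ s := by
  unfold cnt strNA
  congr 1
  ext i
  simp [Prod.ext_iff, and_comm]

lemma cnt_split (J L n : ℕ) (z : Fin n → Stratum J L) (δ : Fin n → Bool) (s : Stratum J L) :
    strNA J L n z δ s + cnt J L n z δ (false, s) = strN J L n z s := by
  unfold cnt strNA strN
  rw [show (Finset.univ.filter fun i => (δ i, z i) = (false, s))
        = Finset.univ.filter fun i => z i = s ∧ ¬ (δ i = true) from by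
      ext i; simp [Prod.ext_iff, and_comm]]
  rw [show (Finset.univ.filter fun i => z i = s ∧ δ i = true)
        = (Finset.univ.filter fun i => z i = s).filter (fun i => δ i = true) from by
      rw [Finset.filter_filter]]
  rw [show (Finset.univ.filter fun i => z i = s ∧ ¬ (δ i = true))
        = (Finset.univ.filter fun i => z i = s).filter (fun i => ¬ (δ i = true)) from by
      rw [Finset.filter_filter]]
  exact Finset.card_filter_add_card_filter_not _

lemma sum_selD_mul (J L : ℕ) (q : Idx J L ⊕ Idx J L) (g : Cols J L → ℝ) :
    ∑ c : Cols J L, selD J L c q * g c = g (Sum.inr q) := by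
  rw [Fintype.sum_sum_type]
  simp only [selD, Matrix.of_apply, zero_mul, Finset.sum_const_zero, zero_add, ite_mul, one_mul]
  rw [Finset.sum_ite_eq' Finset.univ q (fun q' => g (Sum.inr q'))]
  simp

lemma sum_mul_selD (J L : ℕ) (q : Idx J L ⊕ Idx J L) (g : Cols J L → ℝ) :
    ∑ c : Cols J L, g c * selD J L c q = g (Sum.inr q) := by
  rw [← sum_selD_mul J L q g]
  exact Finset.sum_congr rfl fun c _ => by ring

lemma sum_selE_mul (J L : ℕ) (k : Idx J L) (g : Cols J L → ℝ) :
    ∑ c : Cols J L, selE J L c k * g c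
      = g (Sum.inr (Sum.inl k)) - g (Sum.inr (Sum.inr k)) := by
  rw [Fintype.sum_sum_type, Fintype.sum_sum_type]
  simp only [selE, Matrix.of_apply, zero_mul, Finset.sum_const_zero, zero_add, ite_mul,
    one_mul, neg_one_mul]
  rw [Finset.sum_ite_eq' Finset.univ k (fun k' => g (Sum.inr (Sum.inl k')))]
  simp only [show ∀ k' : Idx J L, (if k' = k then -g (Sum.inr (Sum.inr k')) else 0)
        = -(if k' = k then g (Sum.inr (Sum.inr k')) else 0) from fun k' => by
      by_cases h : k' = k <;> simp [h]]
  rw [Finset.sum_neg_distrib,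
    Finset.sum_ite_eq' Finset.univ k (fun k' => g (Sum.inr (Sum.inr k')))]
  simp [sub_eq_add_neg]

lemma sum_mul_selE (J L : ℕ) (k : Idx J L) (g : Cols J L → ℝ) :
    ∑ c : Cols J L, g c * selE J L c k
      = g (Sum.inr (Sum.inl k)) - g (Sum.inr (Sum.inr k)) := by
  rw [← sum_selE_mul J L k g]
  exact Finset.sum_congr rfl fun c _ => by ring

/-- Criteria C4 and C5 coincide (Proposition 3.1):
`tr(Dᵗ(XᵗX)⁻¹D) = tr(Eᵗ(XᵗX)⁻¹E) = tr((XᵗX)⁻¹) − N(0,0)/(Ñ(0,0)(N(0,0)−Ñ(0,0)))`. -/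
theorem C4_eq_C5 (J L n : ℕ) (hJ : 1 ≤ J) (hL : 1 ≤ L) (hn : 1 ≤ n)
    (z : Fin n → Stratum J L) (δ : Fin n → Bool)
    (hA : ∀ s : Stratum J L, 1 ≤ strNA J L n z δ s)
    (hB : ∀ s : Stratum J L, strNA J L n z δ s + 1 ≤ strN J L n z s) :
    ((selD J L)ᵀ * ((designX J L n z δ)ᵀ * designX J L n z δ)⁻¹ * selD J L).trace =
        ((selE J L)ᵀ * ((designX J L n z δ)ᵀ * designX J L n z δ)⁻¹ * selE J L).trace ∧
      ((selD J L)ᵀ * ((designX J L n z δ)ᵀ * designX J L n z δ)⁻¹ * selD J L).trace =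
        (((designX J L n z δ)ᵀ * designX J L n z δ)⁻¹).trace -
          (strN J L n z (0, 0) : ℝ) /
            ((strNA J L n z δ (0, 0) : ℝ) *
              ((strN J L n z (0, 0) : ℝ) - (strNA J L n z δ (0, 0) : ℝ))) := by
  classical
  have hcT : ∀ s, cnt J L n z δ (true, s) = strNA J L n z δ s := cnt_true J L n z δ
  have hcS : ∀ s, strNA J L n z δ s + cnt J L n z δ (false, s) = strN J L n z s :=
    cnt_split J L n z δ
  have hpos : ∀ bs, cnt J L n z δ bs ≠ 0 := by
    rintro ⟨b, s⟩
    cases b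
    · have h1 := hA s; have h2 := hB s; have h3 := hcS s; omega
    · rw [hcT s]; have := hA s; omega
  have hdne : ∀ bs, ((cnt J L n z δ bs : ℝ)) ≠ 0 := fun bs => Nat.cast_ne_zero.mpr (hpos bs)
  set NN : Matrix (Cols J L) (Cols J L) ℝ :=
    (Vmat J L)ᵀ * Matrix.diagonal (fun bs => ((cnt J L n z δ bs : ℝ))⁻¹) * Vmat J L with hNN
  have hVW := VW_eq_one J L
  have ecard : Cols J L ≃ Bool × Stratum J L := Fintype.equivOfCardEq (by
    simp only [Fintype.card_sum, Fintype.card_prod, Fintype.card_fin, Fintype.card_bool]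
    ring)
  have hWV : Wmat J L * Vmat J L = 1 := (Matrix.mul_eq_one_comm_of_equiv ecard).mpr hVW
  have hMN : ((designX J L n z δ)ᵀ * designX J L n z δ) * NN = 1 := by
    rw [M_factor, hNN]
    have h1 : (Wmat J L)ᵀ * (Vmat J L)ᵀ = 1 := by
      rw [← Matrix.transpose_mul, hVW, Matrix.transpose_one]
    have h2 : Matrix.diagonal (fun bs => (cnt J L n z δ bs : ℝ))
        * Matrix.diagonal (fun bs => ((cnt J L n z δ bs : ℝ))⁻¹) = 1 := by
      rw [Matrix.diagonal_mul_diagonal,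
        show (fun bs => (cnt J L n z δ bs : ℝ) * ((cnt J L n z δ bs : ℝ))⁻¹) = fun _ => (1:ℝ)
          from funext fun bs => mul_inv_cancel₀ (hdne bs), Matrix.diagonal_one]
    simp only [Matrix.mul_assoc]
    rw [← Matrix.mul_assoc ((Wmat J L)ᵀ) ((Vmat J L)ᵀ), h1, Matrix.one_mul]
    rw [← Matrix.mul_assoc (Matrix.diagonal (fun bs => (cnt J L n z δ bs : ℝ)))
      (Matrix.diagonal (fun bs => ((cnt J L n z δ bs : ℝ))⁻¹)), h2, Matrix.one_mul, hWV]
  have hMinv : ((designX J L n z δ)ᵀ * designX J L n z δ)⁻¹ = NN :=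
    Matrix.inv_eq_right_inv hMN
  have hNNapp : ∀ c c', NN c c'
      = ∑ bs : Bool × Stratum J L,
          Vmat J L bs c * ((cnt J L n z δ bs : ℝ))⁻¹ * Vmat J L bs c' := by
    intro c c'
    rw [hNN, Matrix.mul_apply]
    simp only [Matrix.mul_diagonal, Matrix.transpose_apply]
  have hcross : ∀ k k' : Idx J L, NN (Sum.inr (Sum.inl k)) (Sum.inr (Sum.inr k')) = 0 := by
    intro k k'
    rw [hNNapp]
    refine Finset.sum_eq_zero ?_
    rintro ⟨b, s⟩ -
    cases b <;> simp [Vmat]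
  have hcross' : ∀ k k' : Idx J L, NN (Sum.inr (Sum.inr k)) (Sum.inr (Sum.inl k')) = 0 := by
    intro k k'
    rw [hNNapp]
    refine Finset.sum_eq_zero ?_
    rintro ⟨b, s⟩ -
    cases b <;> simp [Vmat]
  have hc0 : ∀ s : Stratum J L,
      c0 s = if s = ((0 : Fin (J+1)), (0 : Fin (L+1))) then 1 else 0 := by
    rintro ⟨a, b⟩
    by_cases h1 : a = 0 <;> by_cases h2 : b = 0 <;> simp [c0, uC, Prod.ext_iff, h1, h2]
  have hterm0 : ∀ bs : Bool × Stratum J L,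
      Vmat J L bs (Sum.inl 0) * ((cnt J L n z δ bs : ℝ))⁻¹ * Vmat J L bs (Sum.inl 0)
        = if bs = (true, ((0 : Fin (J+1)), (0 : Fin (L+1))))
            then ((cnt J L n z δ (true, (0, 0)) : ℝ))⁻¹ else 0 := by
    rintro ⟨b, s⟩
    cases b
    · simp [Vmat, Prod.ext_iff]
    · simp only [Vmat, Matrix.of_apply, if_pos rfl, ite_true]
      rw [hc0 s]
      by_cases h : s = ((0 : Fin (J+1)), (0 : Fin (L+1)))
      · simp [h]
      · have h' : ¬(s.1 = 0 ∧ s.2 = 0) := fun hc => h (Prod.ext hc.1 hc.2)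
        have h'' : ¬ s = 0 := by simpa [Prod.ext_iff] using h'
        simp [h, h', h'']
  have hterm1 : ∀ bs : Bool × Stratum J L,
      Vmat J L bs (Sum.inl 1) * ((cnt J L n z δ bs : ℝ))⁻¹ * Vmat J L bs (Sum.inl 1)
        = if bs = (false, ((0 : Fin (J+1)), (0 : Fin (L+1))))
            then ((cnt J L n z δ (false, (0, 0)) : ℝ))⁻¹ else 0 := by
    rintro ⟨b, s⟩
    cases b
    · simp only [Vmat, Matrix.of_apply, if_neg (by simp : ¬ ((1 : Fin 2) = 0)), ite_false]
      rw [hc0 s]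
      by_cases h : s = ((0 : Fin (J+1)), (0 : Fin (L+1)))
      · simp [h]
      · have h' : ¬(s.1 = 0 ∧ s.2 = 0) := fun hc => h (Prod.ext hc.1 hc.2)
        have h'' : ¬ s = 0 := by simpa [Prod.ext_iff] using h'
        simp [h, h', h'']
    · simp [Vmat, Prod.ext_iff, if_neg (by simp : ¬ ((1 : Fin 2) = 0))]
  have h00 : NN (Sum.inl 0) (Sum.inl 0) = ((cnt J L n z δ (true, (0, 0)) : ℝ))⁻¹ := by
    rw [hNNapp]
    simp only [hterm0]
    rw [Finset.sum_ite_eq' Finset.univ (true, ((0 : Fin (J+1)), (0 : Fin (L+1))))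
      (fun _ => ((cnt J L n z δ (true, (0, 0)) : ℝ))⁻¹)]
    simp
  have h11 : NN (Sum.inl 1) (Sum.inl 1) = ((cnt J L n z δ (false, (0, 0)) : ℝ))⁻¹ := by
    rw [hNNapp]
    simp only [hterm1]
    rw [Finset.sum_ite_eq' Finset.univ (false, ((0 : Fin (J+1)), (0 : Fin (L+1))))
      (fun _ => ((cnt J L n z δ (false, (0, 0)) : ℝ))⁻¹)]
    simp
  have htrD : ((selD J L)ᵀ * NN * selD J L).trace
      = ∑ q : Idx J L ⊕ Idx J L, NN (Sum.inr q) (Sum.inr q) := by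
    rw [Matrix.trace]
    refine Finset.sum_congr rfl fun q _ => ?_
    show ((selD J L)ᵀ * NN * selD J L) q q = _
    rw [Matrix.mul_apply]
    calc ∑ c, ((selD J L)ᵀ * NN) q c * selD J L c q
        = ∑ c, NN (Sum.inr q) c * selD J L c q := by
          refine Finset.sum_congr rfl fun c _ => ?_
          rw [Matrix.mul_apply]
          simp only [Matrix.transpose_apply]
          rw [sum_selD_mul J L q (fun c' => NN c' c)]
      _ = NN (Sum.inr q) (Sum.inr q) := sum_mul_selD J L q _
  have htrE : ((selE J L)ᵀ * NN * selE J L).trace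
      = ∑ k : Idx J L, (NN (Sum.inr (Sum.inl k)) (Sum.inr (Sum.inl k))
          + NN (Sum.inr (Sum.inr k)) (Sum.inr (Sum.inr k))) := by
    rw [Matrix.trace]
    refine Finset.sum_congr rfl fun k _ => ?_
    show ((selE J L)ᵀ * NN * selE J L) k k = _
    rw [Matrix.mul_apply]
    calc ∑ c, ((selE J L)ᵀ * NN) k c * selE J L c k
        = ∑ c, (NN (Sum.inr (Sum.inl k)) c - NN (Sum.inr (Sum.inr k)) c) * selE J L c k := by
          refine Finset.sum_congr rfl fun c _ => ?_
          rw [Matrix.mul_apply]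
          simp only [Matrix.transpose_apply]
          rw [sum_selE_mul J L k (fun c' => NN c' c)]
      _ = (NN (Sum.inr (Sum.inl k)) (Sum.inr (Sum.inl k))
            - NN (Sum.inr (Sum.inl k)) (Sum.inr (Sum.inr k)))
          - (NN (Sum.inr (Sum.inr k)) (Sum.inr (Sum.inl k))
            - NN (Sum.inr (Sum.inr k)) (Sum.inr (Sum.inr k))) := by
          rw [show (fun c => (NN (Sum.inr (Sum.inl k)) c - NN (Sum.inr (Sum.inr k)) c)
              * selE J L c k) = fun c => (NN (Sum.inr (Sum.inl k)) c
                - NN (Sum.inr (Sum.inr k)) c) * selE J L c k from rfl]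
          rw [sum_mul_selE J L k (fun c => NN (Sum.inr (Sum.inl k)) c
            - NN (Sum.inr (Sum.inr k)) c)]
          ring
      _ = _ := by rw [hcross k k, hcross' k k]; ring
  have hTDsplit : ∑ q : Idx J L ⊕ Idx J L, NN (Sum.inr q) (Sum.inr q)
      = ∑ k : Idx J L, NN (Sum.inr (Sum.inl k)) (Sum.inr (Sum.inl k))
        + ∑ k : Idx J L, NN (Sum.inr (Sum.inr k)) (Sum.inr (Sum.inr k)) :=
    Fintype.sum_sum_type _
  have htrN : NN.trace = NN (Sum.inl 0) (Sum.inl 0) + NN (Sum.inl 1) (Sum.inl 1)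
      + ∑ q : Idx J L ⊕ Idx J L, NN (Sum.inr q) (Sum.inr q) := by
    rw [Matrix.trace, Fintype.sum_sum_type, Fin.sum_univ_two]
    rfl
  constructor
  · rw [hMinv, htrD, htrE, hTDsplit, ← Finset.sum_add_distrib]
  · rw [hMinv, htrD, htrN, h00, h11]
    have hSN : (strN J L n z (0, 0) : ℝ)
        = (strNA J L n z δ (0, 0) : ℝ) + (cnt J L n z δ (false, (0, 0)) : ℝ) := by
      rw [← hcS (0, 0)]; push_cast; ring
    have hA0 : (strNA J L n z δ (0, 0) : ℝ) ≠ 0 :=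
      Nat.cast_ne_zero.mpr (by have := hA (0, 0); omega)
    have hB0 : (cnt J L n z δ (false, (0, 0)) : ℝ) ≠ 0 := hdne _
    rw [hcT (0, 0), hSN]
    rw [add_sub_cancel_left, ← inv_add_inv hA0 hB0]
    ring
end
end

section
/- Determinant of the treatment-A information block (Appendix, proof of Proposition 3.1): Under the stated hypothesis, the p×p matrix Ω_A = Σ_{i : δ_i = 1} f(z_i)·f(z_i)ᵗ satisfies det Ω_A = Π_{j=1}^{J} Ñ(j,0) · Π_{l=1}^{L} Ñ(0,l) · Π_{j=1}^{J} Π_{l=1}^{L} Ñ(j,l); in particular Ω_A is invertible. -/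
open Matrix Finset

noncomputable section

/-- The treatment-`A` information block `Ω_A = Σ_{i : δ_i = 1} f(z_i) f(z_i)ᵗ`. -/
def OmegaA (J L n : ℕ) (z : Fin n → Stratum J L) (δ : Fin n → Bool) :
    Matrix (Idx J L) (Idx J L) ℝ :=
  ∑ i : Fin n,
    if δ i then Matrix.vecMulVec (dummy J L (z i)) (dummy J L (z i)) else 0

/-- The vector `u = Σ_{i : δ_i = 1} f(z_i)`. -/
def uA (J L n : ℕ) (z : Fin n → Stratum J L) (δ : Fin n → Bool) : Idx J L → ℝ :=
  ∑ i : Fin n, if δ i then dummy J L (z i) else 0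

namespace DetAux
variable (J L : ℕ)

def e : Idx J L → Stratum J L
  | Sum.inl j => (j.succ, 0)
  | Sum.inr (Sum.inl l) => (0, l.succ)
  | Sum.inr (Sum.inr q) => (q.1.succ, q.2.succ)

def phi : Option (Idx J L) → Stratum J L
  | none => (0, 0)
  | some a => e J L a

lemma zero_ne_succ {k : ℕ} (x : Fin k) : ((0 : Fin (k+1)) = x.succ) ↔ False :=
  ⟨fun h => Fin.succ_ne_zero x h.symm, False.elim⟩

lemma phi_bij : Function.Bijective (phi J L) := by
  rw [Fintype.bijective_iff_injective_and_card]
  constructor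
  · rintro (_|(j|l|q)) (_|(j'|l'|q')) h <;>
      simp_all [phi, e, Prod.ext_iff, Fin.succ_ne_zero, Fin.succ_inj, zero_ne_succ]
  · simp [Fintype.card_option, Fintype.card_sum, Fintype.card_prod]
    ring

lemma sum_stratum {M : Type*} [AddCommMonoid M] (g : Stratum J L → M) :
    ∑ s : Stratum J L, g s = g (0, 0) + ∑ a : Idx J L, g (e J L a) := by
  rw [← Fintype.sum_bijective (phi J L) (phi_bij J L) (fun o => g (phi J L o)) g
    (fun _ => rfl), Fintype.sum_option]
  rfl

lemma dummy_zero : dummy J L (0, 0) = 0 := by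
  funext k
  rcases k with j | l | q <;> simp [dummy]

def Mm : Matrix (Idx J L) (Idx J L) ℝ := Matrix.of fun a b => dummy J L (e J L a) b

lemma det_Mm : (Mm J L).det = 1 := by
  rw [← Matrix.fromBlocks_toBlocks (Mm J L)]
  have h12 : (Mm J L).toBlocks₁₂ = 0 := by
    ext j b
    rcases b with l | q <;> simp [Matrix.toBlocks₁₂, Mm, e, dummy]
  have h11 : (Mm J L).toBlocks₁₁ = 1 := by
    ext j j'
    simp [Matrix.toBlocks₁₁, Mm, e, dummy, Matrix.one_apply, Fin.val_inj]
  rw [h12, h11, Matrix.det_fromBlocks_zero₁₂, Matrix.det_one, one_mul]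
  set D := (Mm J L).toBlocks₂₂ with hD
  rw [← Matrix.fromBlocks_toBlocks D]
  have h12' : D.toBlocks₁₂ = 0 := by
    ext l q
    simp [hD, Matrix.toBlocks₁₂, Matrix.toBlocks₂₂, Mm, e, dummy]
  have h11' : D.toBlocks₁₁ = 1 := by
    ext l l'
    simp [hD, Matrix.toBlocks₁₁, Matrix.toBlocks₂₂, Mm, e, dummy, Matrix.one_apply, Fin.val_inj]
  have h22' : D.toBlocks₂₂ = 1 := by
    ext q q'
    simp [hD, Matrix.toBlocks₂₂, Mm, e, dummy, Matrix.one_apply, Fin.val_inj, Prod.ext_iff]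
  rw [h12', h11', h22', Matrix.det_fromBlocks_zero₁₂, Matrix.det_one, one_mul, Matrix.det_one]

variable (n : ℕ) (z : Fin n → Stratum J L) (δ : Fin n → Bool)

lemma omega_sum :
    OmegaA J L n z δ = ∑ s : Stratum J L,
      (strNA J L n z δ s : ℝ) • vecMulVec (dummy J L s) (dummy J L s) := by
  have h1 : ∀ s : Stratum J L, (strNA J L n z δ s : ℝ) •
      vecMulVec (dummy J L s) (dummy J L s)
      = ∑ i : Fin n, if z i = s ∧ δ i = true
          then vecMulVec (dummy J L s) (dummy J L s) else 0 := by
    intro s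
    rw [← Finset.sum_filter, Finset.sum_const, strNA, Nat.cast_smul_eq_nsmul]
  rw [Finset.sum_congr rfl (fun s _ => h1 s), Finset.sum_comm]
  apply Finset.sum_congr rfl
  intro i _
  by_cases h : δ i = true
  · simp [h, Finset.sum_ite_eq]
  · simp [h]

lemma omega_factor :
    OmegaA J L n z δ = (Mm J L)ᵀ *
      (Matrix.diagonal (fun a => (strNA J L n z δ (e J L a) : ℝ)) * Mm J L) := by
  have hz : vecMulVec (0 : Idx J L → ℝ) (0 : Idx J L → ℝ) = 0 := by
    ext b c; simp [Matrix.vecMulVec_apply]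
  rw [omega_sum, sum_stratum, dummy_zero, hz, smul_zero, zero_add]
  ext b c
  rw [Matrix.mul_apply, Matrix.sum_apply]
  apply Finset.sum_congr rfl
  intro a _
  simp [Matrix.vecMulVec_apply, Matrix.diagonal_mul, Mm]
  ring

end DetAux

/-- Determinant of the treatment-`A` information block (Appendix, proof of Proposition 3.1):
`det Ω_A = ∏_j Ñ(j,0) · ∏_l Ñ(0,l) · ∏_{j,l} Ñ(j,l)`; in particular `Ω_A` is invertible. -/
theorem detOmegaA (J L n : ℕ) (hJ : 1 ≤ J) (hL : 1 ≤ L) (hn : 1 ≤ n)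
    (z : Fin n → Stratum J L) (δ : Fin n → Bool)
    (hA : ∀ s : Stratum J L, 1 ≤ strNA J L n z δ s) :
    (OmegaA J L n z δ).det =
        (∏ j : Fin J, (strNA J L n z δ (j.succ, 0) : ℝ)) *
          (∏ l : Fin L, (strNA J L n z δ (0, l.succ) : ℝ)) *
          ∏ j : Fin J, ∏ l : Fin L, (strNA J L n z δ (j.succ, l.succ) : ℝ) ∧
      IsUnit (OmegaA J L n z δ) := by
  have hdet : (OmegaA J L n z δ).det
      = ∏ a : Idx J L, (strNA J L n z δ (DetAux.e J L a) : ℝ) := by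
    rw [DetAux.omega_factor J L n z δ, Matrix.det_mul, Matrix.det_mul,
      Matrix.det_transpose, DetAux.det_Mm, Matrix.det_diagonal, one_mul, mul_one]
  constructor
  · rw [hdet, Fintype.prod_sum_type, Fintype.prod_sum_type, ← mul_assoc,
      Fintype.prod_prod_type]
    rfl
  · rw [Matrix.isUnit_iff_isUnit_det, isUnit_iff_ne_zero, hdet]
    apply ne_of_gt
    apply Finset.prod_pos
    intro a _
    exact_mod_cast Nat.lt_of_lt_of_le Nat.zero_lt_one (hA _)
end
end

section
/- Vector identity for the inverse information block (Appendix, proof of Proposition 3.1): Under the stated hypothesis, with Ω_A = Σ_{i : δ_i = 1} f(z_i)·f(z_i)ᵗ and u = Σ_{i : δ_i = 1} f(z_i) ∈ ℝ^p, the vector Ω_A⁻¹·u has all of its first J + L coordinates (the main-effect coordinates) equal to 1 and all of its last J·L coordinates (the interaction coordinates) equal to −1. -/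
open Matrix Finset

noncomputable section

section Aux

variable {J L : ℕ}

/-- the candidate solution vector -/
def xvec (J L : ℕ) : Idx J L → ℝ :=
  Sum.elim (fun _ => 1) (Sum.elim (fun _ => 1) (fun _ => -1))

lemma dot_expand (s : Stratum J L) (v : Idx J L → ℝ) :
    dummy J L s ⬝ᵥ v =
      (∑ j' : Fin J, if (s.1 : ℕ) = (j' : ℕ) + 1 then v (Sum.inl j') else 0) +
      ((∑ l' : Fin L, if (s.2 : ℕ) = (l' : ℕ) + 1 then v (Sum.inr (Sum.inl l')) else 0) +
      (∑ q : Fin J × Fin L,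
        if (s.1 : ℕ) = (q.1 : ℕ) + 1 ∧ (s.2 : ℕ) = (q.2 : ℕ) + 1
          then v (Sum.inr (Sum.inr q)) else 0)) := by
  simp only [dotProduct, Fintype.sum_sum_type, dummy, ite_mul, one_mul, zero_mul]

lemma sum_indJ (a : Fin (J + 1)) (j : Fin J) (h : (a : ℕ) = (j : ℕ) + 1)
    (v : Fin J → ℝ) : (∑ j' : Fin J, if (a : ℕ) = (j' : ℕ) + 1 then v j' else 0) = v j := by
  rw [Finset.sum_eq_single j]
  · simp [h]
  · intro b _ hb
    rw [if_neg]
    rw [h]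
    intro hc
    exact hb (Fin.ext (by omega)).symm
  · simp

lemma sum_indJL (a : Fin (J + 1)) (b : Fin (L + 1)) (j : Fin J) (l : Fin L)
    (hj : (a : ℕ) = (j : ℕ) + 1) (hl : (b : ℕ) = (l : ℕ) + 1) (v : Fin J × Fin L → ℝ) :
    (∑ q : Fin J × Fin L,
        if (a : ℕ) = (q.1 : ℕ) + 1 ∧ (b : ℕ) = (q.2 : ℕ) + 1 then v q else 0) = v (j, l) := by
  rw [Finset.sum_eq_single (j, l)]
  · simp [hj, hl]
  · intro q _ hq
    rw [if_neg]
    rintro ⟨h1, h2⟩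
    apply hq
    have : q.1 = j := Fin.ext (by omega)
    have : q.2 = l := Fin.ext (by omega)
    exact Prod.ext ‹q.1 = j› ‹q.2 = l›
  · simp

lemma exists_fin_pred {m : ℕ} (a : Fin (m + 1)) (h : (a : ℕ) ≠ 0) :
    ∃ j : Fin m, (a : ℕ) = (j : ℕ) + 1 :=
  ⟨⟨(a : ℕ) - 1, by omega⟩, by simp; omega⟩

lemma dot_xvec_eq_one (s : Stratum J L) (h : ¬((s.1 : ℕ) = 0 ∧ (s.2 : ℕ) = 0)) :
    dummy J L s ⬝ᵥ xvec J L = 1 := by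
  rw [dot_expand]
  rcases Nat.eq_zero_or_pos (s.1 : ℕ) with h1 | h1
  · have h2 : (s.2 : ℕ) ≠ 0 := fun h2 => h ⟨h1, h2⟩
    obtain ⟨l, hl⟩ := exists_fin_pred s.2 h2
    rw [sum_indJ s.2 l hl]
    simp [xvec, h1]
  · obtain ⟨j, hj⟩ := exists_fin_pred s.1 (by omega)
    rw [sum_indJ s.1 j hj]
    rcases Nat.eq_zero_or_pos (s.2 : ℕ) with h2 | h2
    · simp [xvec, h2]
    · obtain ⟨l, hl⟩ := exists_fin_pred s.2 (by omega)
      rw [sum_indJ s.2 l hl, sum_indJL s.1 s.2 j l hj hl]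
      simp [xvec]

lemma dummy_zero (s : Stratum J L) (h1 : (s.1 : ℕ) = 0) (h2 : (s.2 : ℕ) = 0) :
    dummy J L s = 0 := by
  funext k
  rcases k with j' | l' | q <;> simp [dummy, h1, h2]

lemma dummy_smul_dot_xvec (s : Stratum J L) :
    (dummy J L s ⬝ᵥ xvec J L) • dummy J L s = dummy J L s := by
  by_cases h : (s.1 : ℕ) = 0 ∧ (s.2 : ℕ) = 0
  · rw [dummy_zero s h.1 h.2]; simp
  · rw [dot_xvec_eq_one s h, one_smul]

lemma vecMulVec_mulVec' (a b v : Idx J L → ℝ) :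
    Matrix.vecMulVec a b *ᵥ v = (b ⬝ᵥ v) • a := by
  funext k
  simp only [Matrix.mulVec, dotProduct, Pi.smul_apply, smul_eq_mul]
  rw [mul_comm, Finset.mul_sum]
  exact Finset.sum_congr rfl fun m _ => by rw [Matrix.vecMulVec_apply]; ring

lemma sum_mulVec' {ι : Type*} (s : Finset ι) (M : ι → Matrix (Idx J L) (Idx J L) ℝ)
    (v : Idx J L → ℝ) : (∑ i ∈ s, M i) *ᵥ v = ∑ i ∈ s, M i *ᵥ v := by
  classical
  induction s using Finset.induction with
  | empty => simp [Matrix.zero_mulVec]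
  | @insert a s h ih => rw [Finset.sum_insert h, Finset.sum_insert h, Matrix.add_mulVec, ih]

lemma dot_sum' {ι : Type*} (s : Finset ι) (v : Idx J L → ℝ) (w : ι → Idx J L → ℝ) :
    v ⬝ᵥ (∑ i ∈ s, w i) = ∑ i ∈ s, v ⬝ᵥ w i := by
  classical
  induction s using Finset.induction with
  | empty => simp
  | @insert a s h ih => rw [Finset.sum_insert h, Finset.sum_insert h, dotProduct_add, ih]

lemma OmegaA_mulVec_xvec (n : ℕ) (z : Fin n → Stratum J L) (δ : Fin n → Bool) :
    OmegaA J L n z δ *ᵥ xvec J L = uA J L n z δ := by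
  unfold OmegaA uA
  rw [sum_mulVec' Finset.univ]
  refine Finset.sum_congr rfl fun i _ => ?_
  by_cases h : δ i
  · simp only [h, if_true, vecMulVec_mulVec', dummy_smul_dot_xvec]
  · simp [h]

lemma dot_dummy_main_inl (v : Idx J L → ℝ) (j : Fin J) :
    dummy J L (j.succ, 0) ⬝ᵥ v = v (Sum.inl j) := by
  rw [dot_expand]
  have h0 : ((0 : Fin (L + 1)) : ℕ) = 0 := rfl
  rw [sum_indJ (J := J) j.succ j (by simp)]
  simp [h0]

lemma dot_dummy_main_inr (v : Idx J L → ℝ) (l : Fin L) :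
    dummy J L (0, l.succ) ⬝ᵥ v = v (Sum.inr (Sum.inl l)) := by
  rw [dot_expand]
  have h0 : ((0 : Fin (J + 1)) : ℕ) = 0 := rfl
  rw [sum_indJ (J := L) l.succ l (by simp)]
  simp [h0]

lemma dot_dummy_inter (v : Idx J L → ℝ) (j : Fin J) (l : Fin L) :
    dummy J L (j.succ, l.succ) ⬝ᵥ v =
      v (Sum.inl j) + v (Sum.inr (Sum.inl l)) + v (Sum.inr (Sum.inr (j, l))) := by
  rw [dot_expand]
  rw [sum_indJ (J := J) j.succ j (by simp), sum_indJ (J := L) l.succ l (by simp),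
    sum_indJL j.succ l.succ j l (by simp) (by simp)]
  ring

lemma OmegaA_det_ne_zero (n : ℕ) (z : Fin n → Stratum J L) (δ : Fin n → Bool)
    (hA : ∀ s : Stratum J L, 1 ≤ strNA J L n z δ s) :
    (OmegaA J L n z δ).det ≠ 0 := by
  intro hdet
  obtain ⟨v, hv, hMv⟩ := (Matrix.exists_mulVec_eq_zero_iff).mpr hdet
  -- quadratic form
  have hquad : v ⬝ᵥ (OmegaA J L n z δ *ᵥ v) = 0 := by rw [hMv]; simp
  have hexp : v ⬝ᵥ (OmegaA J L n z δ *ᵥ v)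
      = ∑ i : Fin n, if δ i then (dummy J L (z i) ⬝ᵥ v) ^ 2 else 0 := by
    unfold OmegaA
    rw [sum_mulVec' Finset.univ, dot_sum']
    refine Finset.sum_congr rfl fun i _ => ?_
    by_cases h : δ i
    · simp only [h, if_true, vecMulVec_mulVec', dotProduct_smul]
      rw [smul_eq_mul, dotProduct_comm v, sq]
    · simp [h]
  have hterm : ∀ i : Fin n, δ i = true → dummy J L (z i) ⬝ᵥ v = 0 := by
    intro i hi
    have hnn : ∀ i ∈ Finset.univ, (0:ℝ) ≤ if δ i then (dummy J L (z i) ⬝ᵥ v) ^ 2 else 0 := by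
      intro i _; split <;> positivity
    have := (Finset.sum_eq_zero_iff_of_nonneg hnn).mp (hexp ▸ hquad) i (Finset.mem_univ i)
    rw [hi] at this
    simpa using pow_eq_zero_iff (n := 2) (by norm_num) |>.mp (by simpa using this)
  have hstr : ∀ s : Stratum J L, dummy J L s ⬝ᵥ v = 0 := by
    intro s
    have hcard := hA s
    rw [strNA, Finset.one_le_card] at hcard
    obtain ⟨i, hi⟩ := hcard
    simp only [Finset.mem_filter, Finset.mem_univ, true_and] at hi
    rw [← hi.1]
    exact hterm i hi.2
  apply hv
  funext k
  have h1 : ∀ j : Fin J, v (Sum.inl j) = 0 := fun j => by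
    rw [← dot_dummy_main_inl v j]; exact hstr _
  have h2 : ∀ l : Fin L, v (Sum.inr (Sum.inl l)) = 0 := fun l => by
    rw [← dot_dummy_main_inr v l]; exact hstr _
  rcases k with j | l | ⟨j, l⟩
  · exact h1 j
  · exact h2 l
  · have := hstr (j.succ, l.succ)
    rw [dot_dummy_inter, h1 j, h2 l] at this
    simpa using this

end Aux

/-- Vector identity (Appendix, proof of Proposition 3.1): the main-effect coordinates of
`Ω_A⁻¹ u` all equal `1` and its interaction coordinates all equal `−1`. -/
theorem OmegaA_inv_mulVec_uA (J L n : ℕ) (hJ : 1 ≤ J) (hL : 1 ≤ L) (hn : 1 ≤ n)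
    (z : Fin n → Stratum J L) (δ : Fin n → Bool)
    (hA : ∀ s : Stratum J L, 1 ≤ strNA J L n z δ s) :
    (∀ j : Fin J, ((OmegaA J L n z δ)⁻¹ *ᵥ uA J L n z δ) (Sum.inl j) = 1) ∧
      (∀ l : Fin L, ((OmegaA J L n z δ)⁻¹ *ᵥ uA J L n z δ) (Sum.inr (Sum.inl l)) = 1) ∧
      ∀ q : Fin J × Fin L,
        ((OmegaA J L n z δ)⁻¹ *ᵥ uA J L n z δ) (Sum.inr (Sum.inr q)) = -1 := by
  have hdet := OmegaA_det_ne_zero n z δ hA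
  have hunit : IsUnit (OmegaA J L n z δ).det := isUnit_iff_ne_zero.mpr hdet
  have key : (OmegaA J L n z δ)⁻¹ *ᵥ uA J L n z δ = xvec J L := by
    rw [← OmegaA_mulVec_xvec n z δ, Matrix.mulVec_mulVec, Matrix.nonsing_inv_mul _ hunit,
      Matrix.one_mulVec]
  rw [key]
  exact ⟨fun j => rfl, fun l => rfl, fun q => rfl⟩
end
end

section
/- Trace of the inverse information block (Appendix, proof of Proposition 3.1): Under the stated hypothesis, with Ω_A = Σ_{i : δ_i = 1} f(z_i)·f(z_i)ᵗ, one has tr(Ω_A⁻¹) = Σ_{j=1}^{J} Σ_{l=1}^{L} 1/Ñ(j,l) + (L+1)·Σ_{j=1}^{J} 1/Ñ(j,0) + (J+1)·Σ_{l=1}^{L} 1/Ñ(0,l). -/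
open Matrix Finset

noncomputable section

-- auxiliary
def idxStr (J L : ℕ) : Idx J L → Stratum J L
  | Sum.inl j => (j.succ, 0)
  | Sum.inr (Sum.inl l) => (0, l.succ)
  | Sum.inr (Sum.inr q) => (q.1.succ, q.2.succ)

def Emat (J L : ℕ) : Matrix (Idx J L) (Idx J L) ℝ :=
  Matrix.of fun k k' =>
    match k, k' with
    | Sum.inl j, Sum.inr (Sum.inr q) => if q.1 = j then 1 else 0
    | Sum.inr (Sum.inl l), Sum.inr (Sum.inr q) => if q.2 = l then 1 else 0
    | _, _ => 0

lemma dummy_idx (J L : ℕ) (k k' : Idx J L) :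
    dummy J L (idxStr J L k') k = (1 + Emat J L) k k' := by
  rcases k with j | l | q <;> rcases k' with j' | l' | q' <;>
    simp [dummy, idxStr, Emat, Matrix.one_apply, Matrix.add_apply, Fin.val_succ, Fin.ext_iff,
      Prod.ext_iff, eq_comm, And.comm]

lemma Emat_mul_Emat (J L : ℕ) : Emat J L * Emat J L = 0 := by
  ext k k''
  rw [Matrix.mul_apply]
  refine Finset.sum_eq_zero fun k' _ => ?_
  rcases k' with j' | l' | q' <;> rcases k with j | l | q <;> rcases k'' with a | b | c <;>
    simp [Emat]

lemma dummy_zero_s7 (J L : ℕ) : dummy J L 0 = 0 := by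
  funext k
  rcases k with j | l | q <;> simp [dummy]

lemma omega_sum (J L n : ℕ) (z : Fin n → Stratum J L) (δ : Fin n → Bool) :
    OmegaA J L n z δ = ∑ s : Stratum J L,
      (strNA J L n z δ s : ℝ) • Matrix.vecMulVec (dummy J L s) (dummy J L s) := by
  have h1 : ∀ i : Fin n, (if δ i then Matrix.vecMulVec (dummy J L (z i)) (dummy J L (z i)) else 0)
      = ∑ s : Stratum J L, if z i = s ∧ δ i = true then
          Matrix.vecMulVec (dummy J L s) (dummy J L s) else 0 := by
    intro i
    by_cases h : δ i = true
    · simp [h, Finset.sum_ite_eq]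
    · simp [h]
  rw [OmegaA]
  rw [Finset.sum_congr rfl fun i _ => h1 i, Finset.sum_comm]
  refine Finset.sum_congr rfl fun s _ => ?_
  rw [Finset.sum_ite, Finset.sum_const, Finset.sum_const_zero, add_zero, strNA,
    Nat.cast_smul_eq_nsmul]

lemma key_diag {ι : Type*} [Fintype ι] [DecidableEq ι] (A : Matrix ι ι ℝ) (d : ι → ℝ) :
    A * Matrix.diagonal d * Aᵀ
      = ∑ k, d k • Matrix.vecMulVec (fun i => A i k) (fun i => A i k) := by
  ext i j
  rw [Matrix.mul_apply]
  simp only [Matrix.sum_apply, Matrix.smul_apply, Matrix.vecMulVec_apply,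
    Matrix.mul_diagonal, Matrix.transpose_apply, smul_eq_mul]
  exact Finset.sum_congr rfl fun k _ => by ring

lemma sum_stratum {M : Type*} [AddCommMonoid M] (J L : ℕ) (g : Stratum J L → M)
    (h0 : g (0, 0) = 0) :
    ∑ s : Stratum J L, g s = ∑ k : Idx J L, g (idxStr J L k) := by
  rw [← Equiv.sum_comp (Equiv.prodCongr (finSuccEquiv J) (finSuccEquiv L)).symm g]
  rw [Fintype.sum_prod_type, Fintype.sum_option]
  simp only [Fintype.sum_option, Equiv.prodCongr_symm, Equiv.prodCongr_apply, Prod.map,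
    finSuccEquiv_symm_none, finSuccEquiv_symm_some]
  rw [Fintype.sum_sum_type, Fintype.sum_sum_type, Fintype.sum_prod_type]
  simp only [h0, idxStr]
  rw [Finset.sum_add_distrib]
  abel

lemma omega_factor (J L n : ℕ) (z : Fin n → Stratum J L) (δ : Fin n → Bool) :
    OmegaA J L n z δ
      = (1 + Emat J L) *
          Matrix.diagonal (fun k => (strNA J L n z δ (idxStr J L k) : ℝ)) *
          (1 + Emat J L)ᵀ := by
  rw [omega_sum, key_diag]
  rw [sum_stratum J L _ (by rw [show dummy J L (0,0) = 0 from dummy_zero_s7 J L]; ext i j; simp [Matrix.vecMulVec_apply])]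
  refine Finset.sum_congr rfl fun k _ => ?_
  have h : (fun i => (1 + Emat J L) i k) = dummy J L (idxStr J L k) :=
    funext fun i => (dummy_idx J L i k).symm
  rw [h]

lemma one_sub_mul_one_add (J L : ℕ) : (1 - Emat J L) * (1 + Emat J L) = 1 := by
  have h := Emat_mul_Emat J L
  have : (1 - Emat J L) * (1 + Emat J L) = 1 - Emat J L * Emat J L := by noncomm_ring
  rw [this, h, sub_zero]

lemma one_add_mul_one_sub (J L : ℕ) : (1 + Emat J L) * (1 - Emat J L) = 1 := by
  have h := Emat_mul_Emat J L
  have : (1 + Emat J L) * (1 - Emat J L) = 1 - Emat J L * Emat J L := by noncomm_ring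
  rw [this, h, sub_zero]

lemma omega_inv (J L n : ℕ) (z : Fin n → Stratum J L) (δ : Fin n → Bool)
    (hA : ∀ s : Stratum J L, 1 ≤ strNA J L n z δ s) :
    (OmegaA J L n z δ)⁻¹
      = (1 - Emat J L)ᵀ *
          Matrix.diagonal (fun k => (strNA J L n z δ (idxStr J L k) : ℝ)⁻¹) *
          (1 - Emat J L) := by
  apply Matrix.inv_eq_right_inv
  rw [omega_factor]
  have hd : ∀ k : Idx J L, (strNA J L n z δ (idxStr J L k) : ℝ) ≠ 0 := by
    intro k
    have := hA (idxStr J L k)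
    positivity
  have hDD : Matrix.diagonal (fun k => (strNA J L n z δ (idxStr J L k) : ℝ)) *
      Matrix.diagonal (fun k => (strNA J L n z δ (idxStr J L k) : ℝ)⁻¹) = 1 := by
    rw [Matrix.diagonal_mul_diagonal]
    rw [show (fun k => (strNA J L n z δ (idxStr J L k) : ℝ) *
        (strNA J L n z δ (idxStr J L k) : ℝ)⁻¹) = fun _ => 1 from
      funext fun k => mul_inv_cancel₀ (hd k), Matrix.diagonal_one]
  have hT : (1 + Emat J L)ᵀ * (1 - Emat J L)ᵀ = 1 := by
    rw [← Matrix.transpose_mul, one_sub_mul_one_add, Matrix.transpose_one]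
  calc (1 + Emat J L) * Matrix.diagonal (fun k => (strNA J L n z δ (idxStr J L k) : ℝ)) *
          (1 + Emat J L)ᵀ *
        ((1 - Emat J L)ᵀ *
          Matrix.diagonal (fun k => (strNA J L n z δ (idxStr J L k) : ℝ)⁻¹) * (1 - Emat J L))
      = (1 + Emat J L) * Matrix.diagonal (fun k => (strNA J L n z δ (idxStr J L k) : ℝ)) *
          ((1 + Emat J L)ᵀ * (1 - Emat J L)ᵀ) *
          Matrix.diagonal (fun k => (strNA J L n z δ (idxStr J L k) : ℝ)⁻¹) *
          (1 - Emat J L) := by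
        simp only [Matrix.mul_assoc]
    _ = 1 := by
        rw [hT, Matrix.mul_one, Matrix.mul_assoc (1 + Emat J L), hDD, Matrix.mul_one,
          one_add_mul_one_sub]

lemma CC_inl (J L : ℕ) (j : Fin J) :
    (((1 - Emat J L) * (1 - Emat J L)ᵀ : Matrix (Idx J L) (Idx J L) ℝ)) (Sum.inl j) (Sum.inl j) = (L : ℝ) + 1 := by
  rw [Matrix.mul_apply]
  rw [Fintype.sum_sum_type]
  simp [Matrix.sub_apply, Matrix.one_apply, Matrix.transpose_apply, Emat,
    Fintype.sum_sum_type, Fintype.sum_prod_type, ite_mul, mul_ite,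
    Finset.sum_ite_eq, Finset.sum_ite_eq', add_comm]

lemma CC_inrl (J L : ℕ) (l : Fin L) :
    (((1 - Emat J L) * (1 - Emat J L)ᵀ : Matrix (Idx J L) (Idx J L) ℝ)) (Sum.inr (Sum.inl l)) (Sum.inr (Sum.inl l))
      = (J : ℝ) + 1 := by
  rw [Matrix.mul_apply]
  rw [Fintype.sum_sum_type]
  simp [Matrix.sub_apply, Matrix.one_apply, Matrix.transpose_apply, Emat,
    Fintype.sum_sum_type, Fintype.sum_prod_type, ite_mul, mul_ite,
    Finset.sum_ite_eq, Finset.sum_ite_eq', add_comm]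

lemma CC_inrr (J L : ℕ) (q : Fin J × Fin L) :
    (((1 - Emat J L) * (1 - Emat J L)ᵀ : Matrix (Idx J L) (Idx J L) ℝ)) (Sum.inr (Sum.inr q)) (Sum.inr (Sum.inr q)) = 1 := by
  rw [Matrix.mul_apply]
  rw [Fintype.sum_sum_type]
  simp [Matrix.sub_apply, Matrix.one_apply, Matrix.transpose_apply, Emat,
    Fintype.sum_sum_type, Fintype.sum_prod_type, ite_mul, mul_ite,
    Finset.sum_ite_eq, Finset.sum_ite_eq', Prod.ext_iff]


/-- Trace of the inverse information block (Appendix, proof of Proposition 3.1):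
`tr(Ω_A⁻¹) = Σ_j Σ_l 1/Ñ(j,l) + (L+1) Σ_j 1/Ñ(j,0) + (J+1) Σ_l 1/Ñ(0,l)`. -/
theorem trace_OmegaA_inv (J L n : ℕ) (hJ : 1 ≤ J) (hL : 1 ≤ L) (hn : 1 ≤ n)
    (z : Fin n → Stratum J L) (δ : Fin n → Bool)
    (hA : ∀ s : Stratum J L, 1 ≤ strNA J L n z δ s) :
    ((OmegaA J L n z δ)⁻¹).trace =
      (∑ j : Fin J, ∑ l : Fin L, 1 / (strNA J L n z δ (j.succ, l.succ) : ℝ))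
        + ((L : ℝ) + 1) * ∑ j : Fin J, 1 / (strNA J L n z δ (j.succ, 0) : ℝ)
        + ((J : ℝ) + 1) * ∑ l : Fin L, 1 / (strNA J L n z δ (0, l.succ) : ℝ) := by
  rw [omega_inv J L n z δ hA]
  rw [Matrix.mul_assoc, Matrix.trace_mul_comm, Matrix.mul_assoc]
  have htr : ∀ (X : Matrix (Idx J L) (Idx J L) ℝ) (d : Idx J L → ℝ),
      (Matrix.diagonal d * X).trace = ∑ k, d k * X k k := by
    intro X d
    simp [Matrix.trace, Matrix.diag, Matrix.diagonal_mul]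
  rw [htr]
  rw [Fintype.sum_sum_type, Fintype.sum_sum_type, Fintype.sum_prod_type]
  simp only [CC_inl, CC_inrl, CC_inrr, idxStr, one_mul, mul_one, one_div]
  have hc : ∀ (m : ℕ) (c : ℝ) (f : Fin m → ℝ), (∑ i, f i * c) = c * ∑ i, f i := by
    intro m c f
    rw [Finset.mul_sum]
    exact Finset.sum_congr rfl fun _ _ => mul_comm _ _
  rw [hc J ((L : ℝ) + 1), hc L ((J : ℝ) + 1)]
  ring
end
end

section
/- Theorem 5.1: For every ethical weight ω ∈ [0,1), the compound criterion Ψ_ω is a strictly convex function on (0,1)^S and there exists a unique allocation π* ∈ (0,1)^S minimizing Ψ_ω; moreover, when ω > 0, π* is the unique point of (0,1)^S satisfying, for every s ∈ S, the stationarity equation Φ_E(π*)² · ∂Φ_I/∂π(s)(π*) = (ω/(1−ω)) · Φ_E* · Φ_I* · θ(s) · p(s), where ∂Φ_I/∂π(s)(π) = Φ_I(π)·(2π(s)−1)/(π(s)(1−π(s))). -/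
open Finset

noncomputable section

/-- The ethical criterion `Φ_E(π) = Σ_s p(s)·c_s(π(s))`, where `c_s(x) = θ(s)·x` if
`θ(s) > 0`, `c_s(x) = −θ(s)·(1−x)` if `θ(s) < 0`, and `c_s(x) = 0` if `θ(s) = 0`. -/
def PhiE (S : Type*) [Fintype S] (θ p : S → ℝ) (π : S → ℝ) : ℝ :=
  ∑ s : S, p s *
    (if 0 < θ s then θ s * π s else if θ s < 0 then -θ s * (1 - π s) else 0)

/-- The supremum `Φ_E* = Σ_s p(s)·|θ(s)|` of the ethical criterion. -/
def PhiEstar (S : Type*) [Fintype S] (θ p : S → ℝ) : ℝ :=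
  ∑ s : S, p s * |θ s|

/-- The D-optimality inferential criterion `Φ_I(π) = ∏_s (π(s)(1−π(s)))⁻¹`. -/
def PhiI (S : Type*) [Fintype S] (π : S → ℝ) : ℝ :=
  ∏ s : S, (π s * (1 - π s))⁻¹

/-- The minimum `Φ_I* = 4^K` of the inferential criterion over `(0,1)^S`. -/
def PhiIstar (S : Type*) [Fintype S] : ℝ :=
  4 ^ Fintype.card S

/-- The open box `(0,1)^S` of admissible allocations. -/
def Dset (S : Type*) : Set (S → ℝ) :=
  Set.univ.pi fun _ : S => Set.Ioo (0 : ℝ) 1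

/-- The compound criterion `Ψ_ω(π) = ω·Φ_E*/Φ_E(π) + (1−ω)·Φ_I(π)/Φ_I*`. -/
def Psi (S : Type*) [Fintype S] (ω : ℝ) (θ p : S → ℝ) (π : S → ℝ) : ℝ :=
  ω * PhiEstar S θ p / PhiE S θ p π + (1 - ω) * PhiI S π / PhiIstar S

/-- `π` is the optimal compound target `π*_ω(θ,p)`: it minimizes `Ψ_ω` over `(0,1)^S`.
(By the paper's Theorem 5.1 this minimizer exists and is unique.) -/
def IsCompoundTarget (S : Type*) [Fintype S] (ω : ℝ) (θ p : S → ℝ) (π : S → ℝ) : Prop :=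
  π ∈ Dset S ∧ ∀ π' ∈ Dset S, Psi S ω θ p π ≤ Psi S ω θ p π'

section helpers

variable {S : Type*} [Fintype S] (θ p : S → ℝ)

lemma mem_Dset {π : S → ℝ} : π ∈ Dset S ↔ ∀ s, π s ∈ Set.Ioo (0:ℝ) 1 := by
  simp [Dset, Set.mem_pi]

lemma convex_Dset : Convex ℝ (Dset S) := convex_pi fun _ _ => convex_Ioo 0 1

lemma isOpen_Dset : IsOpen (Dset S) :=
  isOpen_set_pi Set.finite_univ fun _ _ => isOpen_Ioo

/-- constant part of the affine function `PhiE`. -/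
def CE (S : Type*) [Fintype S] (θ p : S → ℝ) : ℝ :=
  ∑ s : S, p s * (if θ s < 0 then -θ s else 0)

lemma phiE_eq (π : S → ℝ) :
    PhiE S θ p π = (∑ s : S, (p s * θ s) * π s) + CE S θ p := by
  rw [PhiE, CE, ← Finset.sum_add_distrib]
  refine Finset.sum_congr rfl fun s _ => ?_
  rcases lt_trichotomy (θ s) 0 with h | h | h
  · simp [h, not_lt.mpr h.le, h.not_gt]; ring
  · simp [h]
  · simp [h, not_lt.mpr h.le]; ring

lemma phiE_pos (hp : ∀ s, 0 < p s) (hθ : ∃ s, θ s ≠ 0) {π : S → ℝ}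
    (hπ : π ∈ Dset S) : 0 < PhiE S θ p π := by
  rw [mem_Dset] at hπ
  obtain ⟨s0, hs0⟩ := hθ
  rw [PhiE]
  refine Finset.sum_pos' (fun s _ => ?_) ⟨s0, Finset.mem_univ s0, ?_⟩
  · have h1 := (hπ s).1; have h2 := (hπ s).2
    split_ifs with h h'
    · exact mul_nonneg (hp s).le (mul_nonneg h.le h1.le)
    · exact mul_nonneg (hp s).le (mul_nonneg (by linarith) (by linarith))
    · simp
  · have h1 := (hπ s0).1; have h2 := (hπ s0).2
    rcases hs0.lt_or_gt with h | h
    · rw [if_neg (by linarith), if_pos h]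
      exact mul_pos (hp s0) (mul_pos (by linarith) (by linarith))
    · rw [if_pos h]
      exact mul_pos (hp s0) (mul_pos h h1)

lemma phiEstar_pos (hp : ∀ s, 0 < p s) (hθ : ∃ s, θ s ≠ 0) :
    0 < PhiEstar S θ p := by
  obtain ⟨s0, hs0⟩ := hθ
  exact Finset.sum_pos' (fun s _ => mul_nonneg (hp s).le (abs_nonneg _))
    ⟨s0, Finset.mem_univ s0, mul_pos (hp s0) (abs_pos.mpr hs0)⟩

lemma fac_pos {x : ℝ} (hx : x ∈ Set.Ioo (0:ℝ) 1) : 0 < x * (1 - x) :=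
  mul_pos hx.1 (by linarith [hx.2])

lemma fac_le {x : ℝ} : x * (1 - x) ≤ 1/4 := by nlinarith [sq_nonneg (x - 1/2)]

lemma phiI_pos {π : S → ℝ} (hπ : π ∈ Dset S) : 0 < PhiI S π := by
  rw [mem_Dset] at hπ
  exact Finset.prod_pos fun s _ => inv_pos.mpr (fac_pos (hπ s))

lemma phiIstar_pos : 0 < PhiIstar S := by
  rw [PhiIstar]; positivity

lemma single_le_phiI {π : S → ℝ} (hπ : π ∈ Dset S) (s : S) :
    (π s * (1 - π s))⁻¹ ≤ PhiI S π := by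
  classical
  rw [mem_Dset] at hπ
  have hkey : (1:ℝ) ≤ ∏ j ∈ Finset.univ.erase s, (π j * (1 - π j))⁻¹ := by
    have := Finset.prod_le_prod (s := Finset.univ.erase s)
      (f := fun _ => (1:ℝ)) (g := fun j => (π j * (1 - π j))⁻¹)
      (fun j _ => zero_le_one) (fun j _ => one_le_inv_iff₀.mpr
        ⟨fac_pos (hπ j), le_trans fac_le (by norm_num)⟩)
    simpa using this
  have hsplit : PhiI S π = (π s * (1 - π s))⁻¹ *
      ∏ j ∈ Finset.univ.erase s, (π j * (1 - π j))⁻¹ :=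
    (Finset.mul_prod_erase Finset.univ _ (Finset.mem_univ s)).symm
  rw [hsplit]
  exact le_mul_of_one_le_right (inv_nonneg.mpr (fac_pos (hπ s)).le) hkey

end helpers

section convexity

variable {S : Type*} [Fintype S] (θ p : S → ℝ)

lemma strictConvexOn_neglog :
    StrictConvexOn ℝ (Set.Ioo (0:ℝ) 1) (fun x => -Real.log x + -Real.log (1 - x)) := by
  have h1 : StrictConvexOn ℝ (Set.Ioi (0:ℝ)) (fun x => -Real.log x) :=
    strictConcaveOn_log_Ioi.neg
  have h2 : StrictConvexOn ℝ (Set.Iio (1:ℝ)) (fun x => -Real.log (1 - x)) := by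
    refine ⟨convex_Iio 1, fun x hx y hy hxy a b ha hb hab => ?_⟩
    have hx' : (1:ℝ) - x ∈ Set.Ioi (0:ℝ) := by simp at hx ⊢; linarith
    have hy' : (1:ℝ) - y ∈ Set.Ioi (0:ℝ) := by simp at hy ⊢; linarith
    have hne : (1:ℝ) - x ≠ 1 - y := fun h => hxy (by linarith)
    have := h1.2 hx' hy' hne ha hb hab
    simp only [smul_eq_mul] at this ⊢
    have harg : 1 - (a * x + b * y) = a * (1 - x) + b * (1 - y) := by
      rw [mul_sub, mul_sub]; linarith
    rw [harg]
    exact this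
  have := (h1.subset (fun x hx => hx.1) (convex_Ioo 0 1)).add
    (h2.subset (fun x hx => hx.2) (convex_Ioo 0 1))
  exact this

lemma strictConvexOn_pi_sum {f : ℝ → ℝ}
    (hf : StrictConvexOn ℝ (Set.Ioo (0:ℝ) 1) f) :
    StrictConvexOn ℝ (Dset S) (fun π : S → ℝ => ∑ s : S, f (π s)) := by
  refine ⟨convex_Dset, fun x hx y hy hxy a b ha hb hab => ?_⟩
  rw [mem_Dset] at hx hy
  obtain ⟨s0, hs0⟩ : ∃ s, x s ≠ y s := by
    by_contra h; push_neg at h; exact hxy (funext h)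
  simp only [smul_eq_mul, Pi.add_apply, Pi.smul_apply]
  have key : ∑ s : S, f (a * x s + b * y s) <
      ∑ s : S, (a * f (x s) + b * f (y s)) := by
    refine Finset.sum_lt_sum (fun s _ => ?_) ⟨s0, Finset.mem_univ s0, ?_⟩
    · have := hf.convexOn.2 (hx s) (hy s) ha.le hb.le hab
      simpa using this
    · have := hf.2 (hx s0) (hy s0) hs0 ha hb hab
      simpa using this
  calc ∑ s : S, f (a * x s + b * y s) < ∑ s : S, (a * f (x s) + b * f (y s)) := key
    _ = a * ∑ s : S, f (x s) + b * ∑ s : S, f (y s) := by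
        rw [Finset.sum_add_distrib, Finset.mul_sum, Finset.mul_sum]

lemma phiI_eq_exp {π : S → ℝ} (hπ : π ∈ Dset S) :
    PhiI S π = Real.exp (∑ s : S, (-Real.log (π s) + -Real.log (1 - π s))) := by
  rw [mem_Dset] at hπ
  rw [PhiI, Real.exp_sum]
  refine Finset.prod_congr rfl fun s _ => ?_
  have h1 := (hπ s).1
  have h2 : (0:ℝ) < 1 - π s := by linarith [(hπ s).2]
  rw [Real.exp_add, Real.exp_neg, Real.exp_neg, Real.exp_log h1, Real.exp_log h2,
    mul_inv]

lemma strictConvexOn_phiI : StrictConvexOn ℝ (Dset S) (PhiI S) := by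
  refine ⟨convex_Dset, fun x hx y hy hxy a b ha hb hab => ?_⟩
  have hcomb : a • x + b • y ∈ Dset S := convex_Dset hx hy ha.le hb.le hab
  have hg := (strictConvexOn_pi_sum (S := S) strictConvexOn_neglog).2
    hx hy hxy ha hb hab
  simp only [smul_eq_mul] at hg ⊢
  rw [phiI_eq_exp hx, phiI_eq_exp hy, phiI_eq_exp hcomb]
  calc Real.exp (∑ s : S, (-Real.log ((a • x + b • y) s) + -Real.log (1 - (a • x + b • y) s)))
      < Real.exp (a * ∑ s : S, (-Real.log (x s) + -Real.log (1 - x s)) +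
          b * ∑ s : S, (-Real.log (y s) + -Real.log (1 - y s))) := Real.exp_lt_exp.mpr hg
    _ ≤ a * Real.exp (∑ s : S, (-Real.log (x s) + -Real.log (1 - x s))) +
          b * Real.exp (∑ s : S, (-Real.log (y s) + -Real.log (1 - y s))) := by
        have := convexOn_exp.2
          (Set.mem_univ (∑ s : S, (-Real.log (x s) + -Real.log (1 - x s))))
          (Set.mem_univ (∑ s : S, (-Real.log (y s) + -Real.log (1 - y s))))
          ha.le hb.le hab
        simpa using this

/-- The affine map underlying `PhiE`. -/
def phiE_affine (S : Type*) [Fintype S] (θ p : S → ℝ) : (S → ℝ) →ᵃ[ℝ] ℝ where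
  toFun := PhiE S θ p
  linear :=
    { toFun := fun v => ∑ s : S, (p s * θ s) * v s
      map_add' := by
        intro v w
        simp only [Pi.add_apply, mul_add]
        rw [Finset.sum_add_distrib]
      map_smul' := by
        intro c v
        simp only [Pi.smul_apply, smul_eq_mul, RingHom.id_apply, Finset.mul_sum]
        exact Finset.sum_congr rfl fun s _ => by ring }
  map_vadd' := by
    intro q v
    simp only [vadd_eq_add, phiE_eq, Pi.add_apply, LinearMap.coe_mk, AddHom.coe_mk]
    simp only [mul_add, Finset.sum_add_distrib]
    ring

lemma convexOn_ethical (hp : ∀ s, 0 < p s) (hθ : ∃ s, θ s ≠ 0) {ω : ℝ} (hω0 : 0 ≤ ω) :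
    ConvexOn ℝ (Dset S) (fun π => (ω * PhiEstar S θ p) * (PhiE S θ p π)⁻¹) := by
  have hinv : ConvexOn ℝ (Set.Ioi (0:ℝ)) (fun x : ℝ => x⁻¹) := by
    have := (strictConvexOn_zpow (m := -1) (by decide) (by decide)).convexOn
    simpa using this
  have hsm : ConvexOn ℝ (Set.Ioi (0:ℝ)) (fun x : ℝ => (ω * PhiEstar S θ p) * x⁻¹) := by
    have := hinv.smul (c := ω * PhiEstar S θ p)
      (mul_nonneg hω0 (phiEstar_pos θ p hp hθ).le)
    simpa [smul_eq_mul] using this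
  have hcomp := hsm.comp_affineMap (phiE_affine S θ p)
  refine hcomp.subset (fun π hπ => ?_) (convex_Dset)
  exact phiE_pos θ p hp hθ hπ

lemma strictConvexOn_smul_pos {s : Set (S → ℝ)} {f : (S → ℝ) → ℝ} {c : ℝ} (hc : 0 < c)
    (hf : StrictConvexOn ℝ s f) : StrictConvexOn ℝ s (fun x => c * f x) := by
  refine ⟨hf.1, fun x hx y hy hxy a b ha hb hab => ?_⟩
  have := hf.2 hx hy hxy ha hb hab
  simp only [smul_eq_mul] at this ⊢
  nlinarith

lemma strictConvexOn_psi (hp : ∀ s, 0 < p s) (hθ : ∃ s, θ s ≠ 0) {ω : ℝ}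
    (hω0 : 0 ≤ ω) (hω1 : ω < 1) :
    StrictConvexOn ℝ (Dset S) (Psi S ω θ p) := by
  have hPsi : Psi S ω θ p = fun π =>
      (ω * PhiEstar S θ p) * (PhiE S θ p π)⁻¹ + ((1 - ω) / PhiIstar S) * PhiI S π := by
    funext π; rw [Psi]; ring
  rw [hPsi]
  exact (convexOn_ethical θ p hp hθ hω0).add_strictConvexOn
    (strictConvexOn_smul_pos (div_pos (by linarith) (phiIstar_pos (S := S))) (strictConvexOn_phiI))

end convexity

section derivative

variable {S : Type*} [Fintype S] (θ p : S → ℝ)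

/-- coordinate projection as a continuous linear map. -/
def projL (S : Type*) (s : S) : (S → ℝ) →L[ℝ] ℝ :=
  ContinuousLinearMap.proj s

@[simp] lemma projL_apply (S : Type*) (s : S) (v : S → ℝ) : projL S s v = v s := rfl

/-- coefficient of the differential of `Psi`. -/
def psiCoeff (ω : ℝ) (θ p : S → ℝ) (π : S → ℝ) (s : S) : ℝ :=
  ω * PhiEstar S θ p * (-(PhiE S θ p π ^ 2)⁻¹ * (p s * θ s)) +
  (1 - ω) / PhiIstar S * (PhiI S π * (2 * π s - 1) / (π s * (1 - π s)))

/-- the differential of `Psi`. -/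
def psiDeriv (ω : ℝ) (θ p : S → ℝ) (π : S → ℝ) : (S → ℝ) →L[ℝ] ℝ :=
  ∑ s : S, psiCoeff ω θ p π s • projL S s

lemma psiDeriv_apply (ω : ℝ) (π v : S → ℝ) :
    psiDeriv ω θ p π v = ∑ s : S, psiCoeff ω θ p π s * v s := by
  simp [psiDeriv, projL]

lemma hasFDerivAt_psi (hp : ∀ s, 0 < p s) (hθ : ∃ s, θ s ≠ 0) (ω : ℝ) {π : S → ℝ}
    (hπ : π ∈ Dset S) : HasFDerivAt (Psi S ω θ p) (psiDeriv ω θ p π) π := by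
  classical
  have hπ' := mem_Dset.mp hπ
  have hne : ∀ s, π s * (1 - π s) ≠ 0 := fun s => (fac_pos (hπ' s)).ne'
  have h_proj : ∀ s, HasFDerivAt (fun π : S → ℝ => π s)
      (projL S s) π := fun s =>
    (projL S s).hasFDerivAt
  have h1 : ∀ s, HasFDerivAt (fun π : S → ℝ => π s * (1 - π s))
      ((1 - 2 * π s) • projL S s) π := by
    intro s
    have := (h_proj s).mul ((hasFDerivAt_const (1:ℝ) π).sub (h_proj s))
    refine this.congr_fderiv ?_
    ext v
    simp
    ring
  have h2 : ∀ s, HasFDerivAt (fun π : S → ℝ => (π s * (1 - π s))⁻¹)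
      (((2 * π s - 1) / (π s * (1 - π s)) ^ 2) • projL S s) π := by
    intro s
    have := (hasDerivAt_inv (hne s)).comp_hasFDerivAt π (h1 s)
    refine this.congr_fderiv ?_
    ext v
    simp [smul_smul]
    field_simp
    ring
  have h3 : HasFDerivAt (PhiI S)
      (∑ s : S, (PhiI S π * (2 * π s - 1) / (π s * (1 - π s))) •
        projL S s) π := by
    have hprod := HasFDerivAt.finset_prod (u := Finset.univ) (fun i _ => h2 i)
    have heq : (∑ i : S, (∏ j ∈ Finset.univ.erase i, (π j * (1 - π j))⁻¹) •
          ((2 * π i - 1) / (π i * (1 - π i)) ^ 2) • projL S i) =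
        ∑ s : S, (PhiI S π * (2 * π s - 1) / (π s * (1 - π s))) • projL S s := by
      ext v
      simp only [ContinuousLinearMap.coe_sum', Finset.sum_apply,
        ContinuousLinearMap.coe_smul', Pi.smul_apply, projL_apply, smul_eq_mul]
      refine Finset.sum_congr rfl fun s _ => ?_
      have herase : ∏ j ∈ Finset.univ.erase s, (π j * (1 - π j))⁻¹ =
          PhiI S π * (π s * (1 - π s)) := by
        have h := Finset.mul_prod_erase Finset.univ
          (fun j => (π j * (1 - π j))⁻¹) (Finset.mem_univ s)
        rw [PhiI, ← h, mul_right_comm, inv_mul_cancel₀ (hne s), one_mul]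
      rw [herase]
      have hx := hne s
      field_simp
    exact hprod.congr_fderiv heq
  have h4 : HasFDerivAt (PhiE S θ p)
      (∑ s : S, (p s * θ s) • projL S s) π := by
    have hfun : PhiE S θ p =
        fun π : S → ℝ => (∑ s : S, (p s * θ s) * π s) + CE S θ p :=
      funext (phiE_eq θ p)
    rw [hfun]
    exact (HasFDerivAt.fun_sum fun s _ => (h_proj s).const_mul (p s * θ s)).add_const _
  have hEpos := phiE_pos θ p hp hθ hπ
  have h5 := (hasDerivAt_inv hEpos.ne').comp_hasFDerivAt π h4
  have hPsi : Psi S ω θ p = fun π =>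
      ω * PhiEstar S θ p * (PhiE S θ p π)⁻¹ + (1 - ω) / PhiIstar S * PhiI S π := by
    funext π; rw [Psi]; ring
  rw [hPsi]
  have htot := (h5.const_mul (ω * PhiEstar S θ p)).add (h3.const_mul ((1 - ω) / PhiIstar S))
  refine htot.congr_fderiv ?_
  ext v
  simp only [ContinuousLinearMap.add_apply, ContinuousLinearMap.coe_smul',
    Pi.smul_apply, ContinuousLinearMap.coe_sum', Finset.sum_apply,
    ContinuousLinearMap.proj_apply, smul_eq_mul, psiDeriv, psiCoeff]
  rw [Finset.mul_sum, Finset.mul_sum, Finset.mul_sum, ← Finset.sum_add_distrib]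
  refine Finset.sum_congr rfl fun s _ => ?_
  ring

end derivative

section minimization

variable {S : Type*} [Fintype S] (θ p : S → ℝ)

lemma psiCoeff_zero_iff (hp : ∀ s, 0 < p s) (hθ : ∃ s, θ s ≠ 0) {ω : ℝ} (hω1 : ω < 1)
    {π : S → ℝ} (hπ : π ∈ Dset S) (s : S) :
    psiCoeff ω θ p π s = 0 ↔
      (PhiE S θ p π) ^ 2 * (PhiI S π * (2 * π s - 1) / (π s * (1 - π s))) =
        ω / (1 - ω) * PhiEstar S θ p * PhiIstar S * (θ s * p s) := by
  have hE : PhiE S θ p π ≠ 0 := (phiE_pos θ p hp hθ hπ).ne'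
  have hE2 : (PhiE S θ p π) ^ 2 ≠ 0 := pow_ne_zero _ hE
  have hI : PhiIstar S ≠ 0 := (phiIstar_pos (S := S)).ne'
  have h1ω : (1 : ℝ) - ω ≠ 0 := sub_ne_zero.mpr (by linarith)
  rw [psiCoeff]
  set G := PhiI S π * (2 * π s - 1) / (π s * (1 - π s)) with hG
  clear_value G
  rw [show ω / (1 - ω) * PhiEstar S θ p * PhiIstar S * (θ s * p s) =
      ω * PhiEstar S θ p * PhiIstar S * (θ s * p s) / (1 - ω) by ring,
    eq_div_iff h1ω]
  constructor
  · intro h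
    field_simp at h
    linear_combination h
  · intro h
    field_simp
    linear_combination h

lemma psiDeriv_eq_zero_iff (ω : ℝ) (π : S → ℝ) :
    psiDeriv ω θ p π = 0 ↔ ∀ s, psiCoeff ω θ p π s = 0 := by
  classical
  constructor
  · intro h s
    have h1 := DFunLike.congr_fun h (Pi.single s 1)
    rw [psiDeriv_apply] at h1
    simpa [Pi.single_apply, mul_ite, Finset.sum_ite_eq'] using h1
  · intro h
    ext v
    simp [psiDeriv, h]

lemma deriv_zero_of_min (hp : ∀ s, 0 < p s) (hθ : ∃ s, θ s ≠ 0) (ω : ℝ) {π : S → ℝ}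
    (hπ : π ∈ Dset S) (hmin : ∀ π' ∈ Dset S, Psi S ω θ p π ≤ Psi S ω θ p π') :
    psiDeriv ω θ p π = 0 := by
  have hloc : IsLocalMin (Psi S ω θ p) π :=
    Filter.eventually_of_mem ((isOpen_Dset).mem_nhds hπ) (fun y hy => hmin y hy)
  exact hloc.hasFDerivAt_eq_zero (hasFDerivAt_psi θ p hp hθ ω hπ)

lemma min_of_deriv_zero (hp : ∀ s, 0 < p s) (hθ : ∃ s, θ s ≠ 0) {ω : ℝ}
    (hω0 : 0 ≤ ω) (hω1 : ω < 1) {π : S → ℝ} (hπ : π ∈ Dset S)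
    (hzero : psiDeriv ω θ p π = 0) :
    ∀ π' ∈ Dset S, Psi S ω θ p π ≤ Psi S ω θ p π' := by
  intro π' hπ'
  set g : ℝ → ℝ := fun t => Psi S ω θ p (AffineMap.lineMap π π' t) with hg
  have h0 : AffineMap.lineMap π π' (0 : ℝ) = π := AffineMap.lineMap_apply_zero π π'
  have h1 : AffineMap.lineMap π π' (1 : ℝ) = π' := AffineMap.lineMap_apply_one π π'
  have hmap : HasDerivAt (fun t : ℝ => AffineMap.lineMap π π' t) (π' - π) 0 := by
    have hfun : (fun t : ℝ => AffineMap.lineMap π π' t) =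
        fun t : ℝ => t • (π' - π) + π :=
      funext fun t => AffineMap.lineMap_apply_module' π π' t
    rw [hfun]
    simpa using ((hasDerivAt_id (0 : ℝ)).smul_const (π' - π)).add_const π
  have hF : HasFDerivAt (Psi S ω θ p) (psiDeriv ω θ p π)
      (AffineMap.lineMap π π' (0 : ℝ)) := by
    rw [h0]; exact hasFDerivAt_psi θ p hp hθ ω hπ
  have hline : HasDerivAt g 0 0 := by
    have := hF.comp_hasDerivAt 0 hmap
    simp [hzero] at this
    exact this
  have hconvseg : ConvexOn ℝ (Set.Icc (0 : ℝ) 1) g := by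
    have hcomp := ((strictConvexOn_psi θ p hp hθ hω0 hω1).convexOn).comp_affineMap
      (AffineMap.lineMap π π')
    refine (hcomp.subset (fun t ht => ?_) (convex_Icc 0 1))
    exact Set.mem_preimage.mpr ((convex_Dset).lineMap_mem hπ hπ' ht)
  have hslope := hconvseg.le_slope_of_hasDerivAt
    (Set.left_mem_Icc.mpr zero_le_one) (Set.right_mem_Icc.mpr zero_le_one)
    zero_lt_one hline
  rw [slope_def_field] at hslope
  have hg0 : g 0 = Psi S ω θ p π := by rw [hg]; simp [h0]
  have hg1 : g 1 = Psi S ω θ p π' := by rw [hg]; simp [h1]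
  rw [hg0, hg1] at hslope
  have : (0:ℝ) ≤ Psi S ω θ p π' - Psi S ω θ p π := by
    simpa using hslope
  linarith

lemma exists_min [Nonempty S] (hp : ∀ s, 0 < p s) (hθ : ∃ s, θ s ≠ 0) {ω : ℝ}
    (hω0 : 0 ≤ ω) (hω1 : ω < 1) :
    ∃ π ∈ Dset S, ∀ π' ∈ Dset S, Psi S ω θ p π ≤ Psi S ω θ p π' := by
  set c : ℝ := (1 - ω) / PhiIstar S with hc
  have hcpos : 0 < c := div_pos (by linarith) (phiIstar_pos (S := S))
  set B : ℝ := Psi S ω θ p (fun _ => 1/2) with hB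
  set a : ℝ := min (1/4 : ℝ) (c / (2 * (|B| + 1))) with ha
  have habs : (0:ℝ) < 2 * (|B| + 1) := by positivity
  have ha0 : 0 < a := lt_min (by norm_num) (div_pos hcpos habs)
  have ha4 : a ≤ 1/4 := min_le_left _ _
  have hhalfD : (fun _ : S => (1:ℝ)/2) ∈ Dset S := mem_Dset.mpr fun s => by norm_num
  set C : Set (S → ℝ) := Set.univ.pi (fun _ : S => Set.Icc a (1 - a)) with hC
  have hCD : C ⊆ Dset S := by
    intro π hπ
    refine mem_Dset.mpr fun s => ?_
    have := hπ s (Set.mem_univ s)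
    exact ⟨lt_of_lt_of_le ha0 this.1, lt_of_le_of_lt this.2 (by linarith)⟩
  have hCcomp : IsCompact C := isCompact_univ_pi fun s => isCompact_Icc
  have hCne : C.Nonempty := by
    refine ⟨fun _ => 1/2, fun s _ => ⟨by linarith, by linarith⟩⟩
  have hcont : ContinuousOn (Psi S ω θ p) (Dset S) := fun π hπ =>
    (hasFDerivAt_psi θ p hp hθ ω hπ).differentiableAt.continuousAt.continuousWithinAt
  obtain ⟨πm, hπmC, hmin⟩ := hCcomp.exists_isMinOn hCne (hcont.mono hCD)
  rw [isMinOn_iff] at hmin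
  have hhalfC : (fun _ : S => (1:ℝ)/2) ∈ C := fun s _ => ⟨by linarith, by linarith⟩
  have hπmB : Psi S ω θ p πm ≤ B := hmin _ hhalfC
  have hlower : ∀ π' ∈ Dset S, c * PhiI S π' ≤ Psi S ω θ p π' := by
    intro π' hπ'
    have heth : 0 ≤ ω * PhiEstar S θ p / PhiE S θ p π' :=
      div_nonneg (mul_nonneg hω0 (phiEstar_pos θ p hp hθ).le)
        (phiE_pos θ p hp hθ hπ').le
    have hform : Psi S ω θ p π' =
        ω * PhiEstar S θ p / PhiE S θ p π' + c * PhiI S π' := by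
      rw [Psi, hc]; ring
    linarith [hform ▸ le_refl (Psi S ω θ p π')]
  refine ⟨πm, hCD hπmC, fun π' hπ' => ?_⟩
  by_cases hin : π' ∈ C
  · exact hmin _ hin
  · obtain ⟨s, hs⟩ : ∃ s, π' s ∉ Set.Icc a (1 - a) := by
      by_contra hcon
      push_neg at hcon
      exact hin (fun s _ => hcon s)
    have h01 := mem_Dset.mp hπ' s
    have hfac : π' s * (1 - π' s) < a := by
      rw [Set.mem_Icc, not_and_or] at hs
      rcases hs with hlt | hgt
      · push_neg at hlt
        nlinarith [h01.1, h01.2]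
      · push_neg at hgt
        nlinarith [h01.1, h01.2]
    have hfpos := fac_pos h01
    have hinvlt : a⁻¹ < (π' s * (1 - π' s))⁻¹ := (inv_lt_inv₀ ha0 hfpos).mpr hfac
    have hPhiIbig : a⁻¹ < PhiI S π' := lt_of_lt_of_le hinvlt (single_le_phiI hπ' s)
    have hca : 2 * (|B| + 1) ≤ c * a⁻¹ := by
      have hale : a ≤ c / (2 * (|B| + 1)) := min_le_right _ _
      rw [le_div_iff₀ habs] at hale
      rw [← div_eq_mul_inv, le_div_iff₀ ha0]
      linarith
    have hB2 : B < 2 * (|B| + 1) := by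
      have := le_abs_self B
      linarith [abs_nonneg B]
    have hfinal : B < Psi S ω θ p π' := by
      have h2 : c * a⁻¹ < c * PhiI S π' := by
        exact mul_lt_mul_of_pos_left hPhiIbig hcpos
      linarith [hlower π' hπ']
    linarith

end minimization

/-- Theorem 5.1: for every ethical weight `ω ∈ [0,1)`, the compound criterion `Ψ_ω` is
strictly convex on `(0,1)^S` and has a unique minimizer there; moreover, when `ω > 0`, a
point of `(0,1)^S` is the minimizer iff it satisfies the stationarity equations
`Φ_E(π)²·∂Φ_I/∂π(s)(π) = (ω/(1−ω))·Φ_E*·Φ_I*·θ(s)·p(s)` for all `s`. -/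
theorem compound_criterion_minimizer (S : Type*) [Fintype S] [Nonempty S]
    (θ p : S → ℝ) (hp : ∀ s, 0 < p s) (hθ : ∃ s, θ s ≠ 0)
    (ω : ℝ) (hω0 : 0 ≤ ω) (hω1 : ω < 1) :
    StrictConvexOn ℝ (Dset S) (Psi S ω θ p) ∧
      (∃! π : S → ℝ, π ∈ Dset S ∧ ∀ π' ∈ Dset S, Psi S ω θ p π ≤ Psi S ω θ p π') ∧
      (0 < ω → ∀ π ∈ Dset S,
        ((∀ π' ∈ Dset S, Psi S ω θ p π ≤ Psi S ω θ p π') ↔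
          ∀ s : S,
            (PhiE S θ p π) ^ 2 * (PhiI S π * (2 * π s - 1) / (π s * (1 - π s))) =
              ω / (1 - ω) * PhiEstar S θ p * PhiIstar S * (θ s * p s))) := by
  have hsc := strictConvexOn_psi θ p hp hθ hω0 hω1
  refine ⟨hsc, ?_, ?_⟩
  · obtain ⟨π₀, hπ₀, hmin₀⟩ := exists_min θ p hp hθ hω0 hω1
    refine ⟨π₀, ⟨hπ₀, hmin₀⟩, ?_⟩
    rintro π₁ ⟨hπ₁, hmin₁⟩
    exact hsc.eq_of_isMinOn (isMinOn_iff.mpr hmin₁) (isMinOn_iff.mpr hmin₀) hπ₁ hπ₀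
  · intro _ π hπ
    constructor
    · intro hmin s
      have hz := deriv_zero_of_min θ p hp hθ ω hπ hmin
      exact (psiCoeff_zero_iff θ p hp hθ hω1 hπ s).mp
        ((psiDeriv_eq_zero_iff θ p ω π).mp hz s)
    · intro heqs
      refine min_of_deriv_zero θ p hp hθ hω0 hω1 hπ ?_
      exact (psiDeriv_eq_zero_iff θ p ω π).mpr
        (fun s => (psiCoeff_zero_iff θ p hp hθ hω1 hπ s).mpr (heqs s))
end
end
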